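/- arXiv:2404.14255 — 5 statements merged into one kernel-verified Lean document; each statement's English description precedes it below -/
import Mathlib

section
/- Let G be an n-dimensional crystallographic group and H a finitely generated residually finite group with isomorphic profinite completions Ĝ ≅ Ĥ. Then G is torsion free if and only if H is torsion free. -/
/-- Two groups have the same set of isomorphism classes of finite quotients. -/
def SameFiniteQuotients (G H : Type*) [Group G] [Group H] : Prop :=
  ∀ (Q : Type) [Group Q] [Finite Q],
    (∃ f : G →* Q, Function.Surjective f) ↔ (∃ f : H →* Q, Function.Surjective f)

/-- A group is residually finite if every nontrivial element survives in some finite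
quotient. -/
def ResiduallyFinite (G : Type*) [Group G] : Prop :=
  ∀ g : G, g ≠ 1 → ∃ N : Subgroup G, N.Normal ∧ N.FiniteIndex ∧ g ∉ N

/-- A group has no nontrivial finite normal subgroup. -/
def NoFiniteNormalSubgroup (G : Type*) [Group G] : Prop :=
  ∀ N : Subgroup G, N.Normal → Finite N → N = ⊥

/-- `G` is virtually free abelian of rank `n`, witnessed by a normal finite-index
subgroup isomorphic to `ℤⁿ`. -/
def HasNormalZnFiniteIndex (n : ℕ) (G : Type*) [Group G] : Prop :=
  ∃ N : Subgroup G, N.Normal ∧ N.FiniteIndex ∧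
    Nonempty (N ≃* Multiplicative (Fin n → ℤ))

/-- `G` is an `n`-dimensional crystallographic group (algebraic characterisation:
virtually `ℤⁿ` with no nontrivial finite normal subgroup). -/
def IsCrystallographic (n : ℕ) (G : Type*) [Group G] : Prop :=
  HasNormalZnFiniteIndex n G ∧ NoFiniteNormalSubgroup G

/-- `G` is an `n`-dimensional crystallographic group with point group (isomorphic to) `P`. -/
def IsCrystallographicWithPointGroup (n : ℕ) (G : Type*) [Group G]
    (P : Type*) [Group P] : Prop :=
  NoFiniteNormalSubgroup G ∧ Finite P ∧
    ∃ (N : Subgroup G) (_ : N.Normal), N.FiniteIndex ∧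
      Nonempty (N ≃* Multiplicative (Fin n → ℤ)) ∧ Nonempty ((G ⧸ N) ≃* P)

/-- `G` is a symmorphic `n`-dimensional crystallographic group: the short exact sequence
`1 → ℤⁿ → G → P → 1` splits. -/
def IsSymmorphic (n : ℕ) (G : Type*) [Group G] : Prop :=
  ∃ (N : Subgroup G) (_ : N.Normal), N.FiniteIndex ∧
    Nonempty (N ≃* Multiplicative (Fin n → ℤ)) ∧
    ∃ s : (G ⧸ N) →* G, (QuotientGroup.mk' N).comp s = MonoidHom.id (G ⧸ N)

/-- A group is just infinite if it is infinite but all of its proper quotients are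
finite, i.e. every nontrivial normal subgroup has finite index. -/
def JustInfinite (G : Type*) [Group G] : Prop :=
  Infinite G ∧ ∀ N : Subgroup G, N.Normal → N ≠ ⊥ → N.FiniteIndex

/-- `G` is virtually free abelian: some finite-index subgroup is isomorphic to `ℤⁿ`
for some `n`. -/
def VirtuallyFreeAbelian (G : Type*) [Group G] : Prop :=
  ∃ (n : ℕ) (N : Subgroup G), N.FiniteIndex ∧ Nonempty (N ≃* Multiplicative (Fin n → ℤ))

/-- The set of finite-index normal subgroups of `G`. -/
abbrev NormalFiniteIndexSubgroup (G : Type*) [Group G] : Type _ :=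
  {N : Subgroup G // N.Normal ∧ N.FiniteIndex}

instance (G : Type*) [Group G] (N : NormalFiniteIndexSubgroup G) : N.val.Normal := N.prop.1
instance (G : Type*) [Group G] (N : NormalFiniteIndexSubgroup G) : N.val.FiniteIndex := N.prop.2
instance (G : Type*) [Group G] (N : NormalFiniteIndexSubgroup G) :
    TopologicalSpace (G ⧸ N.val) := ⊥
instance (G : Type*) [Group G] (N : NormalFiniteIndexSubgroup G) :
    DiscreteTopology (G ⧸ N.val) := ⟨rfl⟩
instance (G : Type*) [Group G] (N : NormalFiniteIndexSubgroup G) :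
    IsTopologicalGroup (G ⧸ N.val) := ⟨⟩

/-- The product of all finite quotients of `G`, with the product topology of the
discrete topologies. -/
abbrev ProfiniteAmbient (G : Type*) [Group G] : Type _ :=
  ∀ N : NormalFiniteIndexSubgroup G, G ⧸ N.val

/-- The canonical map `G → ∏ G/N`. -/
def profiniteMap (G : Type*) [Group G] : G →* ProfiniteAmbient G :=
  Pi.monoidHom fun N => QuotientGroup.mk' N.val

/-- The profinite completion of `G`, as the closure of the image of `G` in `∏ G/N`. -/
def profiniteCompletionSubgroup (G : Type*) [Group G] : Subgroup (ProfiniteAmbient G) :=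
  (profiniteMap G).range.topologicalClosure

/-- The profinite completion of `G`. -/
abbrev ProfiniteCompletion (G : Type*) [Group G] : Type _ :=
  ↥(profiniteCompletionSubgroup G)

/-- The canonical homomorphism `ι : G → Ĝ`. -/
def profiniteIota (G : Type*) [Group G] : G →* ProfiniteCompletion G :=
  (profiniteMap G).codRestrict _ fun g =>
    Subgroup.le_topologicalClosure _ ⟨g, rfl⟩

/-- A monoid is torsion-free if no element except `1` has finite order
(the definition `Monoid.IsTorsionFree` of the older Mathlib, since removed). -/
def Monoid.IsTorsionFree (G : Type*) [Monoid G] : Prop :=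
  ∀ g : G, g ≠ 1 → ¬IsOfFinOrder g

section Dev
variable {K : Type*} [Group K]

/-- Evaluation of the profinite completion at a coordinate. -/
def pcEval (M : NormalFiniteIndexSubgroup K) : ProfiniteCompletion K →* K ⧸ M.val :=
  (Pi.evalMonoidHom (fun N : NormalFiniteIndexSubgroup K => K ⧸ N.val) M).comp
    (profiniteCompletionSubgroup K).subtype

lemma pcEval_apply (M : NormalFiniteIndexSubgroup K) (x : ProfiniteCompletion K) :
    pcEval M x = x.val M := rfl

lemma pcEval_iota (M : NormalFiniteIndexSubgroup K) (g : K) :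
    pcEval M (profiniteIota K g) = QuotientGroup.mk g := rfl

lemma pc_ext {x y : ProfiniteCompletion K} (h : ∀ M, pcEval M x = pcEval M y) : x = y :=
  Subtype.ext (funext h)

lemma pcEval_compat {M M' : NormalFiniteIndexSubgroup K} (h : M.val ≤ M'.val)
    (x : ProfiniteCompletion K) :
    QuotientGroup.map M.val M'.val (MonoidHom.id K) (by simpa using h) (pcEval M x)
      = pcEval M' x := by
  have hx : x.val ∈ closure ((profiniteMap K).range : Set (ProfiniteAmbient K)) := x.2
  have key : x.val ∈ {z : ProfiniteAmbient K |
      QuotientGroup.map M.val M'.val (MonoidHom.id K) (by simpa using h) (z M) = z M'} := by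
    refine closure_minimal ?_ ?_ hx
    · rintro _ ⟨g, rfl⟩
      simp [profiniteMap]; rfl
    · exact isClosed_eq (Continuous.comp continuous_of_discreteTopology (continuous_apply M))
        (continuous_apply M')
  exact key

end Dev

section Pow
variable {K : Type*} [Group K] {n : ℕ}

/-- The subgroup of `m`-th powers of an abelian subgroup. -/
def powSub (N : Subgroup K) (hc : ∀ a b : N, a * b = b * a) (m : ℕ) : Subgroup K where
  carrier := {x | ∃ y : N, (y : K) ^ m = x}
  one_mem' := ⟨1, one_pow m⟩
  mul_mem' := by
    rintro a b ⟨y, rfl⟩ ⟨z, rfl⟩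
    refine ⟨y * z, ?_⟩
    have hcom : Commute (y : K) (z : K) := congrArg Subtype.val (hc y z)
    rw [Subgroup.coe_mul, hcom.mul_pow]
  inv_mem' := by
    rintro a ⟨y, rfl⟩
    exact ⟨y⁻¹, by rw [Subgroup.coe_inv, inv_pow]⟩

lemma powSub_le (N : Subgroup K) (hc) (m : ℕ) : powSub N hc m ≤ N := by
  rintro x ⟨y, rfl⟩
  exact pow_mem y.2 m

lemma mem_powSub {N : Subgroup K} {hc} {m : ℕ} {x : K} :
    x ∈ powSub N hc m ↔ ∃ y : N, (y : K) ^ m = x := Iff.rfl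

lemma powSub_normal (N : Subgroup K) [hN : N.Normal] (hc) (m : ℕ) :
    (powSub N hc m).Normal := by
  constructor
  rintro x ⟨y, rfl⟩ g
  exact ⟨⟨g * y * g⁻¹, hN.conj_mem _ y.2 g⟩, by
    show (g * (y : K) * g⁻¹) ^ m = _
    rw [conj_pow]⟩

lemma powSub_mem_of_mem {N : Subgroup K} {hc} {m : ℕ} (y : N) : (y : K) ^ m ∈ powSub N hc m :=
  ⟨y, rfl⟩

lemma powSub_finiteIndex (N : Subgroup K) [hNor : N.Normal] [hfi : N.FiniteIndex]
    (hc) (e : N ≃* Multiplicative (Fin n → ℤ)) {m : ℕ} (hm : 0 < m) :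
    (powSub N hc m).FiniteIndex := by
  haveI : NeZero m := ⟨hm.ne'⟩
  -- the quotient of `N` by `powSub` injects into `(Fin n → ZMod m)`
  let ψ : (Fin n → ℤ) →+ (Fin n → ZMod m) :=
    { toFun := fun v i => (v i : ZMod m)
      map_zero' := by funext i; simp
      map_add' := by intro a b; funext i; simp }
  let f : N →* Multiplicative (Fin n → ZMod m) :=
    (AddMonoidHom.toMultiplicative ψ).comp e.toMonoidHom
  have hker : (powSub N hc m).subgroupOf N = f.ker := by
    ext a
    rw [Subgroup.mem_subgroupOf, MonoidHom.mem_ker]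
    constructor
    · rintro ⟨y, hy⟩
      have hy' : y ^ m = a := Subtype.ext hy
      have h1 : f a = (f y) ^ m := by rw [← map_pow, hy']
      rw [h1]
      have : Multiplicative.toAdd ((f y) ^ m) = 0 := by
        rw [toAdd_pow]
        funext i
        have : (Multiplicative.toAdd (f y)) i = ((Multiplicative.toAdd (e y)) i : ZMod m) := rfl
        rw [Pi.smul_apply, this, Pi.zero_apply, nsmul_eq_mul]
        simp [ZMod.natCast_self]
      calc (f y) ^ m = Multiplicative.ofAdd (Multiplicative.toAdd ((f y) ^ m)) := rfl
        _ = 1 := by rw [this]; rfl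
    · intro ha
      have h0 : ∀ i, (m : ℤ) ∣ (Multiplicative.toAdd (e a)) i := by
        intro i
        have h1 : (Multiplicative.toAdd (f a)) i = 0 := by rw [ha]; rfl
        have h2 : (Multiplicative.toAdd (f a)) i
            = (((Multiplicative.toAdd (e a)) i : ℤ) : ZMod m) := rfl
        rw [h2] at h1
        exact (ZMod.intCast_zmod_eq_zero_iff_dvd _ m).mp h1
      set w : Fin n → ℤ := fun i => (Multiplicative.toAdd (e a)) i / m with hw
      refine ⟨e.symm (Multiplicative.ofAdd w), ?_⟩
      have hym : (e.symm (Multiplicative.ofAdd w)) ^ m = a := by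
        apply e.injective
        rw [map_pow, MulEquiv.apply_symm_apply]
        rw [← ofAdd_nsmul]
        conv_rhs => rw [show e a = Multiplicative.ofAdd (Multiplicative.toAdd (e a)) from rfl]
        refine congrArg Multiplicative.ofAdd ?_
        funext i
        rw [Pi.smul_apply, nsmul_eq_mul, hw]
        exact Int.mul_ediv_cancel' (h0 i)
      calc ((e.symm (Multiplicative.ofAdd w) : N) : K) ^ m
          = (((e.symm (Multiplicative.ofAdd w)) ^ m : N) : K) := by rw [SubgroupClass.coe_pow]
        _ = a := by rw [hym]
  have hfin : Finite (N ⧸ (powSub N hc m).subgroupOf N) := by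
    rw [hker]
    exact Finite.of_equiv _ (QuotientGroup.quotientKerEquivRange f).symm.toEquiv
  have hrel : (powSub N hc m).relIndex N ≠ 0 := by
    haveI := hfin
    exact Subgroup.index_ne_zero_of_finite
  constructor
  rw [← Subgroup.relIndex_mul_index (powSub_le N hc m)]
  exact mul_ne_zero hrel hfi.index_ne_zero

end Pow

section RF
variable {K : Type*} [Group K] {n : ℕ}

lemma comm_of_equiv {N : Subgroup K} (e : N ≃* Multiplicative (Fin n → ℤ)) :
    ∀ a b : N, a * b = b * a := fun a b =>
  e.injective (by rw [map_mul, map_mul, mul_comm])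

lemma rf_of_lattice (N : Subgroup K) (hNor : N.Normal) (hfi : N.FiniteIndex)
    (e : N ≃* Multiplicative (Fin n → ℤ)) : ResiduallyFinite K := by
  intro g hg
  by_cases hgN : g ∈ N
  · set a := Multiplicative.toAdd (e ⟨g, hgN⟩) with ha
    have hane : a ≠ 0 := by
      intro h0
      apply hg
      have : e ⟨g, hgN⟩ = 1 := by
        rw [show (1 : Multiplicative (Fin n → ℤ)) = Multiplicative.ofAdd 0 from rfl, ← h0]
        rfl
      have h2 : (⟨g, hgN⟩ : N) = 1 := by
        apply e.injective; rw [this, map_one]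
      exact congrArg Subtype.val h2
    obtain ⟨i, hi⟩ : ∃ i, a i ≠ 0 := by
      by_contra hcon
      push_neg at hcon
      exact hane (funext hcon)
    set m := (a i).natAbs + 1 with hm
    haveI := hNor
    refine ⟨powSub N (comm_of_equiv e) m, powSub_normal N _ m,
      powSub_finiteIndex N _ e (Nat.succ_pos _), ?_⟩
    rintro ⟨y, hy⟩
    have h1 : y ^ m = (⟨g, hgN⟩ : N) := Subtype.ext hy
    have h2 : (m : ℤ) ∣ a i := by
      have : a = m • Multiplicative.toAdd (e y) := by
        rw [ha, ← h1, map_pow, toAdd_pow]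
      rw [this]
      exact ⟨Multiplicative.toAdd (e y) i, by rw [Pi.smul_apply, nsmul_eq_mul]⟩
    have h3 : (m : ℤ) ≤ |a i| := Int.le_of_dvd (abs_pos.mpr hi) ((dvd_abs _ _).mpr h2)
    rw [Int.abs_eq_natAbs] at h3
    omega
  · exact ⟨N, hNor, hfi, hgN⟩

lemma iota_injective (hrf : ResiduallyFinite K) : Function.Injective (profiniteIota K) := by
  rw [injective_iff_map_eq_one]
  intro g hg1
  by_contra hg
  obtain ⟨M, hMnor, hMfi, hgM⟩ := hrf g hg
  have := congrArg (pcEval (⟨M, hMnor, hMfi⟩ : NormalFiniteIndexSubgroup K)) hg1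
  rw [pcEval_iota, map_one] at this
  exact hgM ((QuotientGroup.eq_one_iff g).mp this)

lemma not_tf_completion (hrf : ResiduallyFinite K) (g : K) (hg : g ≠ 1) (ho : IsOfFinOrder g) :
    ¬ Monoid.IsTorsionFree (ProfiniteCompletion K) := by
  intro hTF
  refine hTF (profiniteIota K g) ?_ ((profiniteIota K).isOfFinOrder ho)
  intro h1
  exact hg (iota_injective hrf (by rw [h1, map_one]))

lemma tf_of_equiv {A B : Type*} [Group A] [Group B] (e : A ≃* B)
    (h : Monoid.IsTorsionFree A) : Monoid.IsTorsionFree B := by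
  intro b hb ho
  refine h (e.symm b) (fun h1 => hb ?_) (e.symm.toMonoidHom.isOfFinOrder ho)
  have := congrArg e h1
  rwa [MulEquiv.apply_symm_apply, map_one] at this

end RF

section Divis

lemma int_eq_zero_of_all_dvd {d : ℤ} (h : ∀ m : ℕ, 0 < m → (m : ℤ) ∣ d) : d = 0 := by
  by_contra hd
  have h3 : ((d.natAbs + 1 : ℕ) : ℤ) ≤ |d| :=
    Int.le_of_dvd (abs_pos.mpr hd) ((dvd_abs _ _).mpr (h _ (Nat.succ_pos _)))
  rw [Int.abs_eq_natAbs] at h3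
  omega

/-- An integral linear equation solvable modulo every `m` is solvable over `ℤ`. -/
lemma solvable_of_solvable_mod {n : ℕ} (B : Module.End ℤ (Fin n → ℤ)) (c : Fin n → ℤ)
    (h : ∀ m : ℕ, 0 < m → ∃ v w, B v + m • w = c) : ∃ v, B v = c := by
  set R := LinearMap.range B with hR
  suffices hc : c ∈ R by exact hc
  set Q := (Fin n → ℤ) ⧸ R with hQ
  haveI : Module.Finite ℤ Q := Module.Finite.quotient ℤ R
  haveI : AddGroup.FG Q := Module.Finite.iff_addGroup_fg.mp inferInstance
  obtain ⟨k, ι, fι, pp, hpp, ee, ⟨F⟩⟩ := AddCommGroup.equiv_free_prod_directSum_zmod Q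
  set q : Q := R.mkQ c with hq
  have hdiv : ∀ m : ℕ, 0 < m → ∃ r : Q, q = m • r := by
    intro m hm
    obtain ⟨v, w, hvw⟩ := h m hm
    refine ⟨R.mkQ w, ?_⟩
    rw [hq, ← hvw, map_add, map_nsmul]
    have : R.mkQ (B v) = 0 := by
      rw [Submodule.mkQ_apply, Submodule.Quotient.mk_eq_zero]
      exact ⟨v, rfl⟩
    rw [this, zero_add]
  suffices hq0 : q = 0 by
    rw [hq, Submodule.mkQ_apply, Submodule.Quotient.mk_eq_zero] at hq0
    exact hq0
  have hF : F q = 0 := by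
    have hdivF : ∀ m : ℕ, 0 < m → ∃ r, F q = m • r := by
      intro m hm
      obtain ⟨r, hr⟩ := hdiv m hm
      exact ⟨F r, by rw [hr, map_nsmul]⟩
    refine Prod.ext ?_ ?_
    · show (F q).1 = 0
      ext j
      refine int_eq_zero_of_all_dvd (fun m hm => ?_)
      obtain ⟨r, hr⟩ := hdivF m hm
      have : (F q).1 j = m • (r.1 j) := by rw [hr]; rfl
      rw [this, nsmul_eq_mul]
      exact Dvd.intro _ rfl
    · show (F q).2 = 0
      refine DFinsupp.ext fun i => ?_
      have hmpos : 0 < pp i ^ ee i := pow_pos (hpp i).pos _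
      obtain ⟨r, hr⟩ := hdivF _ hmpos
      have h1 : (F q).2 i = (pp i ^ ee i) • (r.2 i) := by rw [hr]; rw [Prod.smul_snd, DFinsupp.smul_apply]
      rw [h1, nsmul_eq_mul]
      simp [ZMod.natCast_self]
  have := congrArg F.symm hF
  rwa [AddEquiv.symm_apply_apply, map_zero] at this

end Divis

section Conj
variable {K : Type*} [Group K] {n : ℕ}

/-- Conjugation by `g⁻¹` as an endomorphism of a normal subgroup. -/
def conjHom (N : Subgroup K) [hN : N.Normal] (g : K) : N →* N where
  toFun v := ⟨g⁻¹ * (v : K) * g, by simpa using hN.conj_mem _ v.2 g⁻¹⟩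
  map_one' := by ext; simp
  map_mul' a b := by ext; simp [Subgroup.coe_mul]; group

lemma coe_conjHom_iterate (N : Subgroup K) [hN : N.Normal] (g : K) (k : ℕ) (v : N) :
    (((conjHom N g)^[k] v : N) : K) = g⁻¹ ^ k * (v : K) * g ^ k := by
  induction k with
  | zero => simp
  | succ k ih =>
    rw [Function.iterate_succ_apply']
    show g⁻¹ * (((conjHom N g)^[k] v : N) : K) * g = _
    rw [ih]
    group

/-- The ordered product `τ^[k-1] v * ⋯ * τ v * v`. -/
def prodIter (N : Subgroup K) [N.Normal] (g : K) (v : N) : ℕ → N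
  | 0 => 1
  | (k + 1) => (conjHom N g)^[k] v * prodIter N g v k

lemma pow_formula (N : Subgroup K) [hN : N.Normal] (g : K) (v : N) (k : ℕ) :
    (g * (v : K)) ^ k = g ^ k * ((prodIter N g v k : N) : K) := by
  induction k with
  | zero => simp [prodIter]
  | succ k ih =>
    have hsucc : (g * (v : K)) ^ (k + 1) = (g * (v : K)) * (g * (v : K)) ^ k := by
      rw [pow_succ']
    rw [hsucc, ih]
    show _ = g ^ (k + 1) * (((conjHom N g)^[k] v * prodIter N g v k : N) : K)
    rw [Subgroup.coe_mul, coe_conjHom_iterate]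
    group

end Conj

section Bridge
variable {K : Type*} [Group K] {n : ℕ}

/-- The conjugation action transported to `ℤⁿ`. -/
def conjEnd (N : Subgroup K) [N.Normal] (e : N ≃* Multiplicative (Fin n → ℤ)) (g : K) :
    Module.End ℤ (Fin n → ℤ) :=
  AddMonoidHom.toIntLinearMap
  { toFun := fun w => Multiplicative.toAdd (e (conjHom N g (e.symm (Multiplicative.ofAdd w))))
    map_zero' := by simp
    map_add' := by intro a b; simp [ofAdd_add] }

lemma conjEnd_apply_toAdd (N : Subgroup K) [N.Normal] (e : N ≃* Multiplicative (Fin n → ℤ))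
    (g : K) (u : N) :
    conjEnd N e g (Multiplicative.toAdd (e u)) = Multiplicative.toAdd (e (conjHom N g u)) := by
  simp [conjEnd]

lemma conjEnd_iterate (N : Subgroup K) [N.Normal] (e : N ≃* Multiplicative (Fin n → ℤ))
    (g : K) (k : ℕ) (v : N) :
    Multiplicative.toAdd (e ((conjHom N g)^[k] v))
      = (⇑(conjEnd N e g))^[k] (Multiplicative.toAdd (e v)) := by
  induction k with
  | zero => simp
  | succ k ih =>
    rw [Function.iterate_succ_apply', Function.iterate_succ_apply', ← ih, conjEnd_apply_toAdd]

lemma prodIter_toAdd (N : Subgroup K) [N.Normal] (e : N ≃* Multiplicative (Fin n → ℤ))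
    (g : K) (v : N) (k : ℕ) :
    Multiplicative.toAdd (e (prodIter N g v k))
      = (∑ i ∈ Finset.range k, (conjEnd N e g) ^ i) (Multiplicative.toAdd (e v)) := by
  induction k with
  | zero => simp [prodIter]
  | succ k ih =>
    show Multiplicative.toAdd (e ((conjHom N g)^[k] v * prodIter N g v k)) = _
    rw [map_mul, toAdd_mul, ih, conjEnd_iterate, Finset.sum_range_succ, LinearMap.add_apply,
      Module.End.pow_apply]
    exact add_comm _ _

end Bridge

section Main
variable {K : Type*} [Group K] {n : ℕ}

lemma pow_inj {N : Subgroup K} (e : N ≃* Multiplicative (Fin n → ℤ)) {p : ℕ} (hp : 0 < p)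
    {a b : N} (h : a ^ p = b ^ p) : a = b := by
  have h1 := congrArg (fun z : N => Multiplicative.toAdd (e z)) h
  simp only [map_pow, toAdd_pow] at h1
  have h2 : Multiplicative.toAdd (e a) = Multiplicative.toAdd (e b) := by
    funext i
    have h3 := congrFun h1 i
    rw [Pi.smul_apply, Pi.smul_apply, nsmul_eq_mul, nsmul_eq_mul] at h3
    exact mul_left_cancel₀ (Int.natCast_ne_zero.mpr hp.ne') h3
  exact e.injective (Multiplicative.toAdd.injective h2)

theorem completion_tf_of_lattice (N : Subgroup K) (hNor : N.Normal) (hfi : N.FiniteIndex)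
    (e : N ≃* Multiplicative (Fin n → ℤ)) (hTF : Monoid.IsTorsionFree K) :
    Monoid.IsTorsionFree (ProfiniteCompletion K) := by
  haveI := hNor; haveI := hfi
  have hc := comm_of_equiv e
  set NN : NormalFiniteIndexSubgroup K := ⟨N, hNor, hfi⟩ with hNN
  intro x hx1 hxord
  obtain ⟨p, hp, hxp⟩ := isOfFinOrder_iff_pow_eq_one.mp hxord
  by_cases hN1 : pcEval NN x = 1
  · -- Case A : show x = 1, contradicting hx1
    apply hx1
    refine pc_ext fun M => ?_
    rw [map_one]
    set M1 : Subgroup K := M.val ⊓ N with hM1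
    haveI hM1n : M1.Normal := Subgroup.normal_inf_normal _ _
    haveI hM1f : M1.FiniteIndex := inferInstance
    set q := (M1.subgroupOf N).index with hq
    have hqne : q ≠ 0 := Subgroup.FiniteIndex.index_ne_zero
    have hpq : 0 < p * q := Nat.mul_pos hp (Nat.pos_of_ne_zero hqne)
    haveI hPn := powSub_normal N hc (p * q)
    haveI hPf := powSub_finiteIndex N hc e hpq
    set M2 : Subgroup K := M1 ⊓ powSub N hc (p * q) with hM2
    haveI : M2.Normal := Subgroup.normal_inf_normal _ _
    haveI : M2.FiniteIndex := inferInstance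
    set M2' : NormalFiniteIndexSubgroup K := ⟨M2, inferInstance, inferInstance⟩ with hM2'
    have h2M : M2 ≤ M.val := inf_le_left.trans inf_le_left
    have h2N : M2 ≤ N := inf_le_left.trans inf_le_right
    obtain ⟨w, hw⟩ := QuotientGroup.mk'_surjective M2 (pcEval M2' x)
    have hwN : w ∈ N := by
      have hcomp := pcEval_compat (M := M2') (M' := NN) h2N x
      rw [← hw, QuotientGroup.mk'_apply, QuotientGroup.map_mk, hN1] at hcomp
      exact (QuotientGroup.eq_one_iff _).mp hcomp
    have hwp : w ^ p ∈ M2 := by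
      have h0 : pcEval M2' (x ^ p) = 1 := by rw [hxp, map_one]
      rw [map_pow, ← hw, ← map_pow, QuotientGroup.mk'_apply] at h0
      exact (QuotientGroup.eq_one_iff _).mp h0
    obtain ⟨y, hy⟩ := hwp.2
    set W : N := ⟨w, hwN⟩ with hW
    have hWp : W ^ p = (y ^ q) ^ p := by
      apply Subtype.ext
      rw [SubgroupClass.coe_pow, SubgroupClass.coe_pow, SubgroupClass.coe_pow]
      show w ^ p = ((y : K) ^ q) ^ p
      rw [← pow_mul, mul_comm q p, ← hy]
    have hWeq : W = y ^ q := pow_inj e hp hWp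
    have hyq : (y : K) ^ q ∈ M1 := by
      have h3 : (y ^ q : N) ∈ M1.subgroupOf N := by
        have h4 := Subgroup.pow_index_mem (M1.subgroupOf N) y
        rwa [← hq] at h4
      rw [Subgroup.mem_subgroupOf] at h3
      rwa [SubgroupClass.coe_pow] at h3
    have hwM : w ∈ M.val := by
      have h5 : w = (y : K) ^ q := by
        have := congrArg (Subtype.val) hWeq
        rwa [SubgroupClass.coe_pow] at this
      rw [h5]
      exact (Subgroup.mem_inf.mp hyq).1
    have hcomp := pcEval_compat (M := M2') (M' := M) h2M x
    rw [← hcomp, ← hw, QuotientGroup.mk'_apply, QuotientGroup.map_mk]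
    exact (QuotientGroup.eq_one_iff _).mpr hwM
  · -- Case B
    obtain ⟨g, hg⟩ := QuotientGroup.mk'_surjective N (pcEval NN x)
    have hgne : QuotientGroup.mk' N g ≠ 1 := by rw [hg]; exact hN1
    have hgp : g ^ p ∈ N := by
      have h0 : pcEval NN (x ^ p) = 1 := by rw [hxp, map_one]
      rw [map_pow, ← hg, ← map_pow, QuotientGroup.mk'_apply] at h0
      exact (QuotientGroup.eq_one_iff _).mp h0
    set Bop : Module.End ℤ (Fin n → ℤ) := ∑ i ∈ Finset.range p, (conjEnd N e g) ^ i with hBop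
    set c : Fin n → ℤ := -(Multiplicative.toAdd (e ⟨g ^ p, hgp⟩)) with hcdef
    have hsolv : ∀ m : ℕ, 0 < m → ∃ v w, Bop v + m • w = c := by
      intro m hm
      haveI hPn := powSub_normal N hc m
      haveI hPf := powSub_finiteIndex N hc e hm
      set Lm' : NormalFiniteIndexSubgroup K := ⟨powSub N hc m, hPn, hPf⟩ with hLm'
      obtain ⟨u, hu⟩ := QuotientGroup.mk'_surjective (powSub N hc m) (pcEval Lm' x)
      have hLleN : powSub N hc m ≤ N := powSub_le _ _ _
      have h1 : (QuotientGroup.mk g : K ⧸ N) = QuotientGroup.mk u := by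
        have hcomp := pcEval_compat (M := Lm') (M' := NN) hLleN x
        rw [← hu, QuotientGroup.mk'_apply, QuotientGroup.map_mk] at hcomp
        rw [← hg] at hcomp
        exact hcomp.symm
      have hv0 : g⁻¹ * u ∈ N := QuotientGroup.eq.mp h1
      set v0 : N := ⟨g⁻¹ * u, hv0⟩ with hv0def
      have hu_eq : g * (v0 : K) = u := by
        show g * (g⁻¹ * u) = u
        group
      have hup : u ^ p ∈ powSub N hc m := by
        have h0 : pcEval Lm' (x ^ p) = 1 := by rw [hxp, map_one]
        rw [map_pow, ← hu, ← map_pow, QuotientGroup.mk'_apply] at h0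
        exact (QuotientGroup.eq_one_iff _).mp h0
      obtain ⟨y, hy⟩ := hup
      have hform := pow_formula N g v0 p
      rw [hu_eq] at hform
      have hNeq : (⟨g ^ p, hgp⟩ : N) * prodIter N g v0 p = y ^ m := by
        apply Subtype.ext
        rw [Subgroup.coe_mul, SubgroupClass.coe_pow]
        show g ^ p * _ = (y : K) ^ m
        rw [← hform, hy]
      have hadd := congrArg (fun z : N => Multiplicative.toAdd (e z)) hNeq
      simp only [map_mul, toAdd_mul, map_pow, toAdd_pow] at hadd
      rw [prodIter_toAdd N e g v0 p, ← hBop] at hadd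
      refine ⟨Multiplicative.toAdd (e v0), -(Multiplicative.toAdd (e y)), ?_⟩
      rw [hcdef, smul_neg]
      have h6 : Bop (Multiplicative.toAdd (e v0))
          = m • Multiplicative.toAdd (e y) - Multiplicative.toAdd (e ⟨g ^ p, hgp⟩) := by
        rw [← hadd]; abel
      rw [h6]; abel
    obtain ⟨vs, hvs⟩ := solvable_of_solvable_mod Bop c hsolv
    set vst : N := e.symm (Multiplicative.ofAdd vs) with hvst
    have hPi : (⟨g ^ p, hgp⟩ : N) * prodIter N g vst p = 1 := by
      have h8 : Multiplicative.toAdd (e ((⟨g ^ p, hgp⟩ : N) * prodIter N g vst p))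
          = Multiplicative.toAdd (e (1 : N)) := by
        rw [map_mul, toAdd_mul, prodIter_toAdd N e g vst p, ← hBop, map_one, toAdd_one]
        have h7 : Multiplicative.toAdd (e vst) = vs := by
          rw [hvst, MulEquiv.apply_symm_apply]
          rfl
        rw [h7, hvs, hcdef]
        abel
      exact e.injective (Multiplicative.toAdd.injective h8)
    have hone : (g * (vst : K)) ^ p = 1 := by
      rw [pow_formula N g vst p]
      calc g ^ p * ((prodIter N g vst p : N) : K)
          = ((⟨g ^ p, hgp⟩ * prodIter N g vst p : N) : K) := by rw [Subgroup.coe_mul]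
        _ = 1 := by rw [hPi]; rfl
    have hne1 : g * (vst : K) ≠ 1 := by
      intro h1
      apply hgne
      have h2 : QuotientGroup.mk' N (g * (vst : K)) = 1 := by rw [h1, map_one]
      rw [map_mul] at h2
      have h3 : QuotientGroup.mk' N ((vst : K)) = 1 := (QuotientGroup.eq_one_iff _).mpr vst.2
      rw [h3, mul_one] at h2
      exact h2
    exact hTF (g * (vst : K)) hne1 (isOfFinOrder_iff_pow_eq_one.mpr ⟨p, hp, hone⟩)

end Main

section Transfer
variable {K : Type*} [Group K] {n : ℕ}

/-- Elements of the kernel of evaluation at an abelian coordinate commute. -/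
lemma ker_pcEval_comm (NN : NormalFiniteIndexSubgroup K)
    (hcomm : ∀ a b : K, a ∈ NN.val → b ∈ NN.val → a * b = b * a)
    {x y : ProfiniteCompletion K} (hx : x ∈ (pcEval NN).ker) (hy : y ∈ (pcEval NN).ker) :
    x * y = y * x := by
  rw [MonoidHom.mem_ker] at hx hy
  refine pc_ext fun M => ?_
  haveI : (M.val ⊓ NN.val).Normal := Subgroup.normal_inf_normal _ _
  haveI : (M.val ⊓ NN.val).FiniteIndex := inferInstance
  set M1 : NormalFiniteIndexSubgroup K := ⟨M.val ⊓ NN.val, inferInstance, inferInstance⟩ with hM1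
  have h1N : M1.val ≤ NN.val := inf_le_right
  have h1M : M1.val ≤ M.val := inf_le_left
  obtain ⟨w, hw⟩ := QuotientGroup.mk'_surjective M1.val (pcEval M1 x)
  obtain ⟨z, hz⟩ := QuotientGroup.mk'_surjective M1.val (pcEval M1 y)
  have hwN : w ∈ NN.val := by
    have hcomp := pcEval_compat (M := M1) (M' := NN) h1N x
    rw [← hw, QuotientGroup.mk'_apply, QuotientGroup.map_mk, hx] at hcomp
    exact (QuotientGroup.eq_one_iff _).mp hcomp
  have hzN : z ∈ NN.val := by
    have hcomp := pcEval_compat (M := M1) (M' := NN) h1N y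
    rw [← hz, QuotientGroup.mk'_apply, QuotientGroup.map_mk, hy] at hcomp
    exact (QuotientGroup.eq_one_iff _).mp hcomp
  have hxyM1 : pcEval M1 (x * y) = pcEval M1 (y * x) := by
    rw [map_mul, map_mul, ← hw, ← hz, ← map_mul, ← map_mul, hcomm w z hwN hzN]
  have hcx := pcEval_compat (M := M1) (M' := M) h1M (x * y)
  have hcy := pcEval_compat (M := M1) (M' := M) h1M (y * x)
  rw [← hcx, ← hcy, hxyM1]

/-- A finitely generated torsion-free group whose elements commute is `ℤᵐ`. -/
lemma comm_fg_tf_iso (B : Type*) [Group B] (hc : ∀ a b : B, a * b = b * a)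
    (hfg : Group.FG B) (htf : Monoid.IsTorsionFree B) :
    ∃ m : ℕ, Nonempty (B ≃* Multiplicative (Fin m → ℤ)) := by
  letI : CommGroup B := { (inferInstance : Group B) with mul_comm := hc }
  haveI := hfg
  haveI : AddGroup.FG (Additive B) := AddGroup.fg_of_group_fg
  haveI : Module.Finite ℤ (Additive B) := Module.Finite.iff_addGroup_fg.mpr inferInstance
  haveI : NoZeroSMulDivisors ℤ (Additive B) := by
    constructor
    intro k x hkx
    by_contra hcon
    push_neg at hcon
    obtain ⟨hk, hx⟩ := hcon
    have hnx0 : k.natAbs • x = 0 := by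
      have h2 : ((k.natAbs : ℤ)) • x = 0 := by
        rcases Int.natAbs_eq k with h | h
        · rw [← h]; exact hkx
        · have h3 : k • x = -(((k.natAbs : ℤ)) • x) := by conv_lhs => rw [h, neg_zsmul]
          rw [hkx] at h3
          exact neg_eq_zero.mp h3.symm
      rwa [natCast_zsmul] at h2
    have hpow : (Additive.toMul x) ^ k.natAbs = 1 := by
      rw [← toMul_nsmul, hnx0]
      rfl
    have hne1 : Additive.toMul x ≠ 1 := hx
    refine htf (Additive.toMul x) hne1 (isOfFinOrder_iff_pow_eq_one.mpr
      ⟨k.natAbs, Int.natAbs_pos.mpr hk, hpow⟩)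
  haveI : Module.Free ℤ (Additive B) := Module.free_of_finite_type_torsion_free'
  obtain ⟨m, b⟩ := Module.basisOfFiniteTypeTorsionFree' (R := ℤ) (M := Additive B)
  refine ⟨m, ⟨?_⟩⟩
  exact AddEquiv.toMultiplicativeRight (b.equivFun.toAddEquiv)

end Transfer

section Assemble

lemma tf_of_completion_tf {K : Type*} [Group K] (hrf : ResiduallyFinite K)
    (h : Monoid.IsTorsionFree (ProfiniteCompletion K)) : Monoid.IsTorsionFree K :=
  fun g hg ho => absurd h (not_tf_completion hrf g hg ho)

lemma lattice_of_completion_iso {G H : Type*} [Group G] [Group H] {n : ℕ}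
    (N : Subgroup G) (hNor : N.Normal) (hfi : N.FiniteIndex)
    (e : N ≃* Multiplicative (Fin n → ℤ))
    (ψ : ProfiniteCompletion G ≃* ProfiniteCompletion H)
    (hHfg : Group.FG H) (hHrf : ResiduallyFinite H) (hHtf : Monoid.IsTorsionFree H) :
    ∃ (m : ℕ) (B : Subgroup H), B.Normal ∧ B.FiniteIndex ∧
      Nonempty (B ≃* Multiplicative (Fin m → ℤ)) := by
  haveI := hNor; haveI := hfi
  set NN : NormalFiniteIndexSubgroup G := ⟨N, hNor, hfi⟩ with hNN
  set U : Subgroup (ProfiniteCompletion G) := (pcEval NN).ker with hU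
  haveI hUfi : U.FiniteIndex := inferInstance
  set V : Subgroup (ProfiniteCompletion H) := U.map ψ.toMonoidHom with hV
  have hkerle : (ψ.toMonoidHom).ker ≤ U := by
    intro z hz
    rw [MonoidHom.mem_ker] at hz
    have hz1 : z = 1 := ψ.injective (by rw [map_one]; exact hz)
    rw [hz1]
    exact U.one_mem
  haveI hVfi : V.FiniteIndex := by
    constructor
    rw [hV, Subgroup.index_map_eq U ψ.surjective hkerle]
    exact hUfi.index_ne_zero
  set A : Subgroup H := V.comap (profiniteIota H) with hA
  haveI hAfi : A.FiniteIndex := by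
    constructor
    rw [hA, Subgroup.index_comap]
    have hsub : (V.subgroupOf (profiniteIota H).range).FiniteIndex := inferInstance
    exact hsub.index_ne_zero
  set B : Subgroup H := A.normalCore with hB
  haveI hBn : B.Normal := inferInstance
  haveI hBfi : B.FiniteIndex := inferInstance
  have hAcomm : ∀ a b : H, a ∈ A → b ∈ A → a * b = b * a := by
    intro a b ha hb
    rw [hA, Subgroup.mem_comap] at ha hb
    obtain ⟨ua, hua, hua2⟩ := ha
    obtain ⟨ub, hub, hub2⟩ := hb
    have hcommN : ∀ c d : G, c ∈ NN.val → d ∈ NN.val → c * d = d * c := fun c d hcN hdN =>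
      congrArg Subtype.val (comm_of_equiv e ⟨c, hcN⟩ ⟨d, hdN⟩)
    have h1 : ua * ub = ub * ua := ker_pcEval_comm NN hcommN hua hub
    apply iota_injective hHrf
    rw [map_mul, map_mul, ← hua2, ← hub2, ← map_mul, ← map_mul, h1]
  have hBcomm : ∀ a b : B, a * b = b * a := fun a b =>
    Subtype.ext (hAcomm a b (A.normalCore_le a.2) (A.normalCore_le b.2))
  have hBfg : Group.FG B := by
    haveI := hHfg
    infer_instance
  have hBtf : Monoid.IsTorsionFree B := by
    intro b hb ho
    exact hHtf (b : H) (fun h1 => hb (OneMemClass.coe_eq_one.mp h1))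
      (B.subtype.isOfFinOrder ho)
  obtain ⟨m, ⟨eb⟩⟩ := comm_fg_tf_iso B hBcomm hBfg hBtf
  exact ⟨m, B, hBn, hBfi, ⟨eb⟩⟩

end Assemble

/-- If `G` is an `n`-dimensional crystallographic group and `H` is a finitely generated
residually finite group with `Ĝ ≅ Ĥ`, then `G` is torsion free iff `H` is torsion free. -/
theorem torsion_free_profinite_invariant
    (n : ℕ) (G : Type*) [Group G] (hG : IsCrystallographic n G)
    (H : Type*) [Group H] (hHfg : Group.FG H) (hHrf : ResiduallyFinite H)
    (hiso : Nonempty (ProfiniteCompletion G ≃* ProfiniteCompletion H)) :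
    Monoid.IsTorsionFree G ↔ Monoid.IsTorsionFree H := by
  obtain ⟨⟨N, hNor, hNfi, ⟨e⟩⟩, -⟩ := hG
  obtain ⟨ψ⟩ := hiso
  have hGrf := rf_of_lattice N hNor hNfi e
  constructor
  · intro hGtf
    exact tf_of_completion_tf hHrf (tf_of_equiv ψ (completion_tf_of_lattice N hNor hNfi e hGtf))
  · intro hHtf
    obtain ⟨m, B, hBn, hBfi, ⟨eb⟩⟩ := lattice_of_completion_iso N hNor hNfi e ψ hHfg hHrf hHtf
    exact tf_of_completion_tf hGrf
      (tf_of_equiv ψ.symm (completion_tf_of_lattice B hBn hBfi eb hHtf))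
end

section
/- Let G be a virtually free abelian group of rank n ≥ 1. Then G is isomorphic to an n-dimensional crystallographic group (a discrete, cocompact subgroup of the isometry group of Euclidean space ℝⁿ) if and only if G has no nontrivial finite normal subgroup. -/
/-- The group of isometries of a metric space acts on the space. -/
instance isometryEquivMulAction (X : Type*) [MetricSpace X] : MulAction (X ≃ᵢ X) X where
  smul f x := f x
  one_smul _ := rfl
  mul_smul _ _ _ := rfl

/-- `G` is isomorphic to an `n`-dimensional crystallographic group: a discrete (i.e. acting
properly discontinuously) cocompact subgroup of the isometry group of Euclidean `n`-space. -/
def IsCrystallographicGeom (n : ℕ) (G : Type*) [Group G] : Prop :=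
  ∃ Γ : Subgroup (EuclideanSpace ℝ (Fin n) ≃ᵢ EuclideanSpace ℝ (Fin n)),
    Nonempty (G ≃* Γ) ∧
    ProperlyDiscontinuousSMul Γ (EuclideanSpace ℝ (Fin n)) ∧
    CompactSpace (Quotient (MulAction.orbitRel Γ (EuclideanSpace ℝ (Fin n))))

noncomputable def crysToE {n : ℕ} (v : Fin n → ℝ) : EuclideanSpace ℝ (Fin n) :=
  (WithLp.equiv 2 _).symm v

@[simp] lemma crysToE_apply {n : ℕ} (v : Fin n → ℝ) (i : Fin n) : crysToE v i = v i := rfl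

lemma crysToE_add {n : ℕ} (v w : Fin n → ℝ) : crysToE (v + w) = crysToE v + crysToE w := rfl
lemma crysToE_sub {n : ℕ} (v w : Fin n → ℝ) : crysToE (v - w) = crysToE v - crysToE w := rfl

open Matrix in
private lemma crys_sum_mulVec {α : Type*} {n : ℕ} (t : Finset α)
    (M : α → Matrix (Fin n) (Fin n) ℝ) (x : Fin n → ℝ) :
    (∑ j ∈ t, M j) *ᵥ x = ∑ j ∈ t, (M j) *ᵥ x := by
  classical
  induction t using Finset.cons_induction with
  | empty => simp [Matrix.zero_mulVec]
  | cons a t ha ih => rw [Finset.sum_cons, Finset.sum_cons, Matrix.add_mulVec, ih]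

open Matrix in
private lemma crys_mulVec_sum {α : Type*} {n : ℕ} (t : Finset α)
    (A : Matrix (Fin n) (Fin n) ℝ) (v : α → (Fin n → ℝ)) :
    A *ᵥ (∑ j ∈ t, v j) = ∑ j ∈ t, A *ᵥ v j := by
  classical
  induction t using Finset.cons_induction with
  | empty => simp [Matrix.mulVec_zero]
  | cons a t ha ih => rw [Finset.sum_cons, Finset.sum_cons, Matrix.mulVec_add, ih]

open Matrix in
private lemma crys_dot_sum {α : Type*} {n : ℕ} (t : Finset α)
    (x : Fin n → ℝ) (v : α → (Fin n → ℝ)) :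
    x ⬝ᵥ (∑ j ∈ t, v j) = ∑ j ∈ t, x ⬝ᵥ v j := by
  classical
  induction t using Finset.cons_induction with
  | empty => simp
  | cons a t ha ih => rw [Finset.sum_cons, Finset.sum_cons, dotProduct_add, ih]

private lemma crys_sum_apply {α : Type*} {n : ℕ} (t : Finset α)
    (v : α → EuclideanSpace ℝ (Fin n)) (i : Fin n) :
    (∑ j ∈ t, v j) i = ∑ j ∈ t, v j i := by
  classical
  induction t using Finset.cons_induction with
  | empty => rfl
  | cons a t ha ih => rw [Finset.sum_cons, Finset.sum_cons, ← ih]; rfl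

open Matrix in
private lemma crys_normE {n : ℕ} (v : Fin n → ℝ) :
    ‖crysToE v‖ = Real.sqrt (v ⬝ᵥ v) := by
  rw [EuclideanSpace.norm_eq]
  congr 1
  apply Finset.sum_congr rfl
  intro i _
  rw [crysToE_apply, Real.norm_eq_abs, sq_abs, sq]

open Matrix in
private lemma crys_dot_shift {n : ℕ} (B : Matrix (Fin n) (Fin n) ℝ) (v w : Fin n → ℝ) :
    (B *ᵥ v) ⬝ᵥ w = v ⬝ᵥ (Bᵀ *ᵥ w) := by
  rw [dotProduct_comm, Matrix.dotProduct_mulVec, dotProduct_comm]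
  congr 1
  rw [← Matrix.transpose_transpose B, Matrix.vecMul_transpose, Matrix.transpose_transpose]

private lemma crys_coord_le {n : ℕ} (x : EuclideanSpace ℝ (Fin n)) (i : Fin n) :
    |x i| ≤ ‖x‖ := by
  rw [EuclideanSpace.norm_eq, ← Real.sqrt_sq_eq_abs]
  apply Real.sqrt_le_sqrt
  have h : x i ^ 2 = ‖x i‖ ^ 2 := by rw [Real.norm_eq_abs, sq_abs]
  rw [h]
  exact Finset.single_le_sum (f := fun j => ‖x j‖ ^ 2)
    (fun j _ => sq_nonneg _) (Finset.mem_univ i)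

private lemma crys_norm_le {n : ℕ} (x : EuclideanSpace ℝ (Fin n)) (C : ℝ)
    (h : ∀ i, |x i| ≤ C) : ‖x‖ ≤ Real.sqrt (n * C ^ 2) := by
  rw [EuclideanSpace.norm_eq]
  apply Real.sqrt_le_sqrt
  calc ∑ i, ‖x i‖ ^ 2 ≤ ∑ _i : Fin n, C ^ 2 := by
        apply Finset.sum_le_sum
        intro i _
        rw [Real.norm_eq_abs]
        exact pow_le_pow_left₀ (abs_nonneg _) (h i) 2
    _ = n * C ^ 2 := by simp [Finset.sum_const, Finset.card_univ, nsmul_eq_mul]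

open Matrix in
private lemma crys_opBound {n : ℕ} (B : Matrix (Fin n) (Fin n) ℝ) :
    ∃ C : ℝ, 0 ≤ C ∧ ∀ v : EuclideanSpace ℝ (Fin n), ‖crysToE (B *ᵥ v)‖ ≤ C * ‖v‖ := by
  let Bl : EuclideanSpace ℝ (Fin n) →ₗ[ℝ] EuclideanSpace ℝ (Fin n) :=
    { toFun := fun v => crysToE (B *ᵥ v)
      map_add' := fun x y => by
        rw [WithLp.ofLp_add, Matrix.mulVec_add, crysToE_add]
      map_smul' := fun r x => by
        rw [WithLp.ofLp_smul, Matrix.mulVec_smul]; rfl }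
  let Bc := LinearMap.toContinuousLinearMap Bl
  exact ⟨‖Bc‖, norm_nonneg _, fun v => Bc.le_opNorm v⟩

private lemma crys_intvec_finite (n : ℕ) (C : ℝ) :
    {v : Fin n → ℤ | ∀ i, |(v i : ℝ)| ≤ C}.Finite := by
  apply Set.Finite.subset (Set.Finite.pi (t := fun _ : Fin n => Set.Icc (-⌈C⌉) ⌈C⌉)
    (fun _ => Set.finite_Icc _ _))
  intro v hv
  rw [Set.mem_pi]
  intro i _
  have h := hv i
  rw [abs_le] at h
  constructor
  · have h1 : (-(⌈C⌉:ℤ) : ℝ) ≤ (v i : ℝ) := by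
      have := Int.le_ceil C
      push_cast
      linarith [h.1]
    exact_mod_cast h1
  · have h1 : ((v i : ℝ)) ≤ ((⌈C⌉:ℤ) : ℝ) := by
      have := Int.le_ceil C
      linarith [h.2]
    exact_mod_cast h1

open scoped MatrixOrder in
open Matrix in
theorem bwd_aux (n : ℕ) (G : Type*) [Group G] (L : Subgroup G) [L.Normal] [L.FiniteIndex]
    (φ : L → EuclideanSpace ℝ (Fin n))
    (hadd : ∀ a b : L, φ (a * b) = φ a + φ b)
    (hinj : Function.Injective φ)
    (hZ : ∀ (l : L) (i : Fin n), ∃ z : ℤ, φ l i = (z : ℝ))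
    (m : ℕ) (hm : 0 < m)
    (lm : Fin n → L)
    (hlm : ∀ i j, φ (lm i) j = if j = i then (m : ℝ) else 0)
    (hG : ∀ N : Subgroup G, N.Normal → Finite N → N = ⊥) :
    IsCrystallographicGeom n G := by
  classical
  haveI : Finite (G ⧸ L) := L.finite_quotient_of_finiteIndex
  haveI : Fintype (G ⧸ L) := Fintype.ofFinite _
  have hφ1 : φ 1 = 0 := by
    have h0 := hadd 1 1
    rw [mul_one] at h0
    have h2 : φ 1 + 0 = φ 1 + φ 1 := by rw [add_zero]; exact h0
    exact (add_left_cancel h2).symm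
  set Φ : L →* Multiplicative (EuclideanSpace ℝ (Fin n)) :=
    MonoidHom.mk' (fun l => Multiplicative.ofAdd (φ l)) (fun a b => by
      show Multiplicative.ofAdd (φ (a*b)) = Multiplicative.ofAdd (φ a + φ b)
      rw [hadd]) with hΦdef
  have hΦ : ∀ l : L, Multiplicative.toAdd (Φ l) = φ l := fun l => rfl
  have hcomm : ∀ a b : L, a * b = b * a := by
    intro a b
    apply hinj
    rw [hadd, hadd, add_comm]
  letI : CommGroup L := { (inferInstance : Group L) with mul_comm := hcomm }
  set zc : L → Fin n → ℤ := fun l i => (hZ l i).choose with hzcdef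
  have hzc : ∀ (l : L) (i : Fin n), φ l i = ((zc l i : ℤ) : ℝ) := fun l i => (hZ l i).choose_spec
  have hFsum : ∀ (F : L →* Multiplicative (EuclideanSpace ℝ (Fin n))) (k : Fin n → ℤ) (i : Fin n),
      Multiplicative.toAdd (F (∏ j, lm j ^ k j)) i
        = ∑ j, (k j : ℝ) * (Multiplicative.toAdd (F (lm j)) i) := by
    intro F k i
    rw [map_prod, toAdd_prod, crys_sum_apply]
    apply Finset.sum_congr rfl
    intro j _
    rw [map_zpow, toAdd_zpow, ← Int.cast_smul_eq_zsmul ℝ]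
    rfl
  have hFpow : ∀ (F : L →* Multiplicative (EuclideanSpace ℝ (Fin n))) (l : L) (i : Fin n),
      Multiplicative.toAdd (F (l ^ m)) i = (m : ℝ) * (Multiplicative.toAdd (F l) i) := by
    intro F l i
    rw [map_pow, toAdd_pow, ← Nat.cast_smul_eq_nsmul ℝ]
    rfl
  have hφprod : ∀ (k : Fin n → ℤ) (j : Fin n),
      φ (∏ i, lm i ^ k i) j = (k j : ℝ) * m := by
    intro k j
    rw [← hΦ, hFsum Φ k j]
    have h1 : ∀ i, (k i : ℝ) * (Multiplicative.toAdd (Φ (lm i)) j)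
        = (k i : ℝ) * (if j = i then (m:ℝ) else 0) := by
      intro i; rw [hΦ, hlm]
    rw [Finset.sum_congr rfl (fun i _ => h1 i)]
    simp [mul_ite, Finset.sum_ite_eq]
  have hldec : ∀ l : L, (∏ j, lm j ^ zc l j) = l ^ m := by
    intro l
    apply hinj
    apply WithLp.ofLp_injective
    funext i
    rw [hφprod (zc l)]
    rw [← hΦ, hFpow Φ l i, hΦ, hzc l i]
    ring
  set ρ : G → Matrix (Fin n) (Fin n) ℝ :=
    fun g => Matrix.of (fun i j => (m:ℝ)⁻¹ * φ ((MulAut.conjNormal g) (lm j)) i) with hρdef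
  have hkey : ∀ (g : G) (l : L), ρ g *ᵥ (φ l) = φ ((MulAut.conjNormal g) l) := by
    intro g l
    set F : L →* Multiplicative (EuclideanSpace ℝ (Fin n)) :=
      Φ.comp ((MulAut.conjNormal g)).toMonoidHom with hFdef
    have hF : ∀ x : L, Multiplicative.toAdd (F x) = φ ((MulAut.conjNormal g) x) := fun x => rfl
    funext i
    show ∑ j, (m:ℝ)⁻¹ * φ ((MulAut.conjNormal g) (lm j)) i * φ l j = _
    have hsum : ∑ j, (zc l j : ℝ) * (Multiplicative.toAdd (F (lm j)) i)
        = (m : ℝ) * (Multiplicative.toAdd (F l) i) := by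
      rw [← hFsum F (zc l) i, hldec l, hFpow F l i]
    have hm0 : (m:ℝ) ≠ 0 := by positivity
    calc ∑ j, (m:ℝ)⁻¹ * φ ((MulAut.conjNormal g) (lm j)) i * φ l j
        = ∑ j, (m:ℝ)⁻¹ * ((zc l j : ℝ) * (Multiplicative.toAdd (F (lm j)) i)) := by
          apply Finset.sum_congr rfl
          intro j _
          rw [hF, hzc l j]
          ring
      _ = (m:ℝ)⁻¹ * ((m:ℝ) * (Multiplicative.toAdd (F l) i)) := by
          rw [← Finset.mul_sum, hsum]
      _ = φ ((MulAut.conjNormal g) l) i := by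
          rw [hF]
          field_simp
  have hmatext : ∀ A B : Matrix (Fin n) (Fin n) ℝ,
      (∀ j, A *ᵥ φ (lm j) = B *ᵥ φ (lm j)) → A = B := by
    intro A B h
    ext i j
    have h1 := congrFun (h j) i
    have h2 : ∀ (C : Matrix (Fin n) (Fin n) ℝ), (C *ᵥ φ (lm j)) i = C i j * m := by
      intro C
      show ∑ k, C i k * φ (lm j) k = _
      have h3 : ∀ k, C i k * φ (lm j) k = if k = j then C i k * m else 0 := by
        intro k
        rw [hlm]
        by_cases hkj : k = j <;> simp [hkj]
      rw [Finset.sum_congr rfl (fun k _ => h3 k), Finset.sum_ite_eq' Finset.univ j]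
      simp
    rw [h2 A, h2 B] at h1
    have hm' : (m:ℝ) ≠ 0 := by positivity
    exact mul_right_cancel₀ hm' h1
  have hρmul : ∀ g h : G, ρ (g * h) = ρ g * ρ h := by
    intro g h
    apply hmatext
    intro j
    rw [← Matrix.mulVec_mulVec, hkey, hkey, hkey, _root_.map_mul]
    rfl
  have hρL : ∀ l : L, ρ (l : G) = 1 := by
    intro l
    apply hmatext
    intro j
    rw [hkey, Matrix.one_mulVec]
    refine congrArg (fun x => WithLp.ofLp (φ x)) ?_
    apply Subtype.ext
    rw [MulAut.conjNormal_apply]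
    have hc : (l : G) * (lm j : G) = (lm j : G) * (l : G) := by
      have h4 := hcomm l (lm j)
      calc (l:G) * lm j = ((l * lm j : L) : G) := rfl
        _ = ((lm j * l : L) : G) := by rw [h4]
        _ = (lm j : G) * l := rfl
    rw [hc, mul_assoc]
    simp
  have hρ1 : ρ (1 : G) = 1 := by
    have h5 := hρL 1
    simpa using h5
  have hρinv : ∀ g : G, ρ g * ρ g⁻¹ = 1 := by
    intro g
    have hgg : g * g⁻¹ = 1 := by group
    rw [← hρmul, hgg, hρ1]
  have hρinv' : ∀ g : G, ρ g⁻¹ * ρ g = 1 := by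
    intro g
    have hgg : g⁻¹ * g = 1 := by group
    rw [← hρmul, hgg, hρ1]
  -- quotient machinery
  set π : G →* G ⧸ L := QuotientGroup.mk' L with hπdef
  set sec : G ⧸ L → G := fun q => Quotient.out q with hsecdef
  have hπs : ∀ q, π (sec q) = q := fun q => QuotientGroup.out_eq' q
  have hπL : ∀ l : L, π (l : G) = 1 := fun l => (QuotientGroup.eq_one_iff _).2 l.2
  have hmemL : ∀ g : G, π g = 1 → g ∈ L := fun g h => (QuotientGroup.eq_one_iff g).1 h
  set lot : G → L := fun g => ⟨(sec (π g))⁻¹ * g, by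
    apply hmemL
    rw [_root_.map_mul, _root_.map_inv, hπs]
    simp⟩ with hlotdef
  have hlot : ∀ g : G, ((lot g : G)) = (sec (π g))⁻¹ * g := fun g => rfl
  have hdec : ∀ g : G, sec (π g) * (lot g : G) = g := by
    intro g; rw [hlot, mul_inv_cancel_left]
  have hρπ : ∀ g : G, ρ g = ρ (sec (π g)) := by
    intro g
    conv_lhs => rw [← hdec g]
    rw [hρmul, hρL, mul_one]
  clear_value ρ
  -- Pi-typed version of φ
  set φp : L → (Fin n → ℝ) := fun l => (φ l : Fin n → ℝ) with hφpdef
  have hφp : ∀ (l : L) (i : Fin n), φp l i = φ l i := fun _ _ => rfl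
  have hφpadd : ∀ a b : L, φp (a * b) = φp a + φp b := fun a b => by
    show (φ (a * b)).ofLp = (φ a).ofLp + (φ b).ofLp
    rw [hadd, WithLp.ofLp_add]
  have hφp1 : φp 1 = 0 := by
    show (φ 1).ofLp = 0
    rw [hφ1, WithLp.ofLp_zero]
  have hφpinj : Function.Injective φp := fun a b h => hinj (WithLp.ofLp_injective 2 h)
  have hkeyp : ∀ (g : G) (l : L), ρ g *ᵥ φp l = φp ((MulAut.conjNormal g) l) :=
    fun g l => hkey g l
  have hzcp : ∀ (l : L) (i : Fin n), φp l i = ((zc l i : ℤ) : ℝ) := fun l i => hzc l i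
  have hφprodp : ∀ (k : Fin n → ℤ) (j : Fin n),
      φp (∏ i, lm i ^ k i) j = (k j : ℝ) * m := fun k j => hφprod k j
  clear_value φp
  -- the translational part
  set u : G → (Fin n → ℝ) := fun g => ρ (sec (π g)) *ᵥ φp (lot g) with hudef
  have hu : ∀ g, u g = ρ (sec (π g)) *ᵥ φp (lot g) := fun _ => rfl
  have hu' : ∀ g, u g = ρ g *ᵥ φp (lot g) := by
    intro g; rw [hu, ← hρπ]
  have hu_right : ∀ (g : G) (l : L), u (g * l) = u g + ρ g *ᵥ φp l := by
    intro g l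
    have hπ' : π (g * l) = π g := by rw [_root_.map_mul, hπL, mul_one]
    have hlot' : lot (g * l) = lot g * l := by
      apply Subtype.ext
      show (sec (π (g * l)))⁻¹ * (g * l) = (sec (π g))⁻¹ * g * l
      rw [hπ', mul_assoc]
    rw [hu, hu, hπ', hlot', hφpadd, Matrix.mulVec_add, hρπ g]
  have hcc : ∀ (x : G) (l : L),
      (MulAut.conjNormal x) ((MulAut.conjNormal x⁻¹) l) = l := by
    intro x l
    apply Subtype.ext
    rw [MulAut.conjNormal_apply, MulAut.conjNormal_apply]
    group
  have hu_left : ∀ (l : L) (g : G), u ((l : G) * g) = φp l + u g := by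
    intro l g
    have hπ' : π ((l:G) * g) = π g := by rw [_root_.map_mul, hπL, one_mul]
    have hlot' : lot ((l:G) * g) = (MulAut.conjNormal (sec (π g))⁻¹) l * lot g := by
      apply Subtype.ext
      show (sec (π ((l:G) * g)))⁻¹ * ((l:G) * g)
          = ((MulAut.conjNormal (sec (π g))⁻¹) l : G) * ((sec (π g))⁻¹ * g)
      rw [hπ', MulAut.conjNormal_apply]
      group
    rw [hu, hu, hπ', hlot', hφpadd, Matrix.mulVec_add, hkeyp, hcc]
  clear_value u
  set dd : G → G → (Fin n → ℝ) := fun g h => u (g * h) - u g - ρ g *ᵥ u h with hdddef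
  have hdd : ∀ g h, dd g h = u (g * h) - u g - ρ g *ᵥ u h := fun _ _ => rfl
  clear_value dd
  have hdd_right : ∀ (g h : G) (l : L), dd g (h * l) = dd g h := by
    intro g h l
    rw [hdd, hdd, ← mul_assoc, hu_right, hu_right, Matrix.mulVec_add,
      Matrix.mulVec_mulVec, ← hρmul]
    abel
  have hdd_left : ∀ (g : G) (l : L) (h : G), dd (g * l) h = dd g h := by
    intro g l h
    have hρgl : ρ (g * l) = ρ g := by rw [hρmul, hρL, mul_one]
    have hswap : g * (l:G) * h = (g * h) * ((MulAut.conjNormal h⁻¹) l : G) := by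
      rw [MulAut.conjNormal_apply]
      group
    rw [hdd, hdd, hρgl, hswap, hu_right, hu_right, hρmul g h, ← Matrix.mulVec_mulVec,
      hkeyp, hcc]
    abel
  have hdd_coc : ∀ g h k : G, dd g h + dd (g * h) k = ρ g *ᵥ dd h k + dd g (h * k) := by
    intro g h k
    rw [hdd, hdd, hdd, hdd, Matrix.mulVec_sub, Matrix.mulVec_sub,
      Matrix.mulVec_mulVec, ← hρmul, ← mul_assoc]
    abel
  set card : ℕ := Fintype.card (G ⧸ L) with hcarddef
  have hcard0 : (card : ℝ) ≠ 0 := Nat.cast_ne_zero.2 Fintype.card_ne_zero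
  set bb : G → (Fin n → ℝ) := fun g => (card : ℝ)⁻¹ • ∑ q : G ⧸ L, dd g (sec q) with hbbdef
  have hbb : ∀ g, bb g = (card : ℝ)⁻¹ • ∑ q : G ⧸ L, dd g (sec q) := fun _ => rfl
  clear_value bb
  have hdd_secshift : ∀ (g h : G) (q : G ⧸ L), dd g (h * sec q) = dd g (sec (π h * q)) := by
    intro g h q
    have h1 : h * sec q = sec (π h * q) * (lot (h * sec q) : G) := by
      conv_lhs => rw [← hdec (h * sec q)]
      rw [_root_.map_mul, hπs]
    rw [h1, hdd_right]
  have hshift : ∀ g h : G, ∑ q : G ⧸ L, dd g (h * sec q) = ∑ q : G ⧸ L, dd g (sec q) := by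
    intro g h
    rw [Finset.sum_congr rfl (fun q _ => hdd_secshift g h q)]
    exact Fintype.sum_equiv (Equiv.mulLeft (π h)) _ _ (fun q => rfl)
  have hb_ident : ∀ g h : G, dd g h = ρ g *ᵥ bb h + bb g - bb (g * h) := by
    intro g h
    have hsum : ∑ q : G ⧸ L, (dd g h + dd (g * h) (sec q))
        = ∑ q : G ⧸ L, (ρ g *ᵥ dd h (sec q) + dd g (h * sec q)) :=
      Finset.sum_congr rfl (fun q _ => hdd_coc g h (sec q))
    rw [Finset.sum_add_distrib, Finset.sum_add_distrib, Finset.sum_const,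
      ← crys_mulVec_sum, hshift] at hsum
    have hkey2 : (card : ℝ) • dd g h
        = ρ g *ᵥ (∑ q : G ⧸ L, dd h (sec q)) + (∑ q : G ⧸ L, dd g (sec q))
          - (∑ q : G ⧸ L, dd (g * h) (sec q)) := by
      rw [Nat.cast_smul_eq_nsmul]
      rw [Finset.card_univ] at hsum
      rw [eq_sub_iff_add_eq]
      exact hsum
    rw [hbb, hbb, hbb, Matrix.mulVec_smul, ← smul_add, ← smul_sub, ← hkey2,
      smul_smul, inv_mul_cancel₀ hcard0, one_smul]
  have hbb_right : ∀ (g : G) (l : L), bb (g * l) = bb g := by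
    intro g l
    rw [hbb, hbb]
    congr 1
    exact Finset.sum_congr rfl (fun q _ => hdd_left g l (sec q))
  set tt : G → (Fin n → ℝ) := fun g => u g + bb g with httdef
  have htt : ∀ g, tt g = u g + bb g := fun _ => rfl
  clear_value tt
  have htt_hom : ∀ g h : G, tt (g * h) = tt g + ρ g *ᵥ tt h := by
    intro g h
    have h2 : dd g h = u (g * h) - u g - ρ g *ᵥ u h := hdd g h
    have h3 : u (g * h) - u g - ρ g *ᵥ u h = ρ g *ᵥ bb h + bb g - bb (g * h) := by
      rw [← h2]; exact hb_ident g h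
    have h4 : u (g * h) = ρ g *ᵥ bb h + bb g - bb (g * h) + u g + ρ g *ᵥ u h := by
      rw [← h3]; abel
    rw [htt, htt, htt, h4, Matrix.mulVec_add]
    abel
  have htt1 : tt 1 = 0 := by
    have h5 := htt_hom 1 1
    rw [mul_one, hρ1, Matrix.one_mulVec] at h5
    exact (left_eq_add.mp h5)
  have htt_L : ∀ l : L, tt (l : G) = φp l := by
    intro l
    have h6 : u (l : G) = φp l + u 1 := by
      have h9 := hu_left l 1
      rwa [mul_one] at h9
    have h7 : bb (l : G) = bb 1 := by
      have h9 := hbb_right 1 l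
      rwa [one_mul] at h9
    have h8 : tt (l : G) = φp l + tt 1 := by
      rw [htt, htt, h6, h7]
      abel
    rw [h8, htt1, add_zero]
  -- the invariant quadratic form
  set MM : Matrix (Fin n) (Fin n) ℝ := ∑ q : G ⧸ L, (ρ (sec q))ᵀ * ρ (sec q) with hMMdef
  have hMM : MM = ∑ q : G ⧸ L, (ρ (sec q))ᵀ * ρ (sec q) := rfl
  clear_value MM
  have hMinv : ∀ g : G, (ρ g)ᵀ * MM * ρ g = MM := by
    intro g
    have hstep : ∀ q : G ⧸ L, ρ (sec q) * ρ g = ρ (sec (q * π g)) := by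
      intro q
      rw [← hρmul]
      have : π (sec q * g) = q * π g := by rw [_root_.map_mul, hπs]
      rw [hρπ (sec q * g), this]
    calc (ρ g)ᵀ * MM * ρ g
        = ∑ q : G ⧸ L, (ρ g)ᵀ * ((ρ (sec q))ᵀ * ρ (sec q)) * ρ g := by
          rw [hMM, Finset.mul_sum, Finset.sum_mul]
      _ = ∑ q : G ⧸ L, (ρ (sec q) * ρ g)ᵀ * (ρ (sec q) * ρ g) := by
          apply Finset.sum_congr rfl
          intro q _
          rw [Matrix.transpose_mul]
          noncomm_ring
      _ = ∑ q : G ⧸ L, (ρ (sec (q * π g)))ᵀ * ρ (sec (q * π g)) := by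
          apply Finset.sum_congr rfl
          intro q _
          rw [hstep]
      _ = MM := by
          rw [hMM]
          exact Fintype.sum_equiv (Equiv.mulRight (π g)) _ _ (fun q => rfl)
  have hMsym : MMᵀ = MM := by
    rw [hMM, Matrix.transpose_sum]
    apply Finset.sum_congr rfl
    intro q _
    rw [Matrix.transpose_mul, Matrix.transpose_transpose]
  have hsec1 : ρ (sec 1) = 1 := by
    have hmem : sec (1 : G ⧸ L) ∈ L := hmemL _ (hπs 1)
    have : ρ ((⟨sec 1, hmem⟩ : L) : G) = 1 := hρL ⟨sec 1, hmem⟩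
    exact this
  have hdotnn : ∀ v : Fin n → ℝ, 0 ≤ v ⬝ᵥ v :=
    fun v => Finset.sum_nonneg (fun i _ => mul_self_nonneg _)
  have hMpd : MM.PosDef := by
    apply Matrix.PosDef.of_dotProduct_mulVec_pos
    · show MMᴴ = MM
      rw [Matrix.conjTranspose_eq_transpose_of_trivial]
      exact hMsym
    · intro x hx
      have hsx : star x = x := by simp
      rw [hsx, hMM, crys_sum_mulVec, crys_dot_sum]
      have hterm : ∀ q : G ⧸ L, x ⬝ᵥ ((ρ (sec q))ᵀ * ρ (sec q)) *ᵥ x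
          = (ρ (sec q) *ᵥ x) ⬝ᵥ (ρ (sec q) *ᵥ x) := by
        intro q
        rw [crys_dot_shift, Matrix.mulVec_mulVec]
      rw [Finset.sum_congr rfl (fun q _ => hterm q)]
      apply Finset.sum_pos'
      · intro q _
        exact hdotnn _
      · refine ⟨1, Finset.mem_univ _, ?_⟩
        rw [hsec1, Matrix.one_mulVec]
        obtain ⟨i, hi⟩ := Function.ne_iff.1 hx
        apply Finset.sum_pos'
        · intro j _
          exact mul_self_nonneg _
        · exact ⟨i, Finset.mem_univ _, mul_self_pos.2 (by simpa using hi)⟩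
  have psd := hMpd.posSemidef
  set W : Matrix (Fin n) (Fin n) ℝ := CFC.sqrt MM with hWdef
  have hW2 : W * W = MM := CFC.sqrt_mul_sqrt_self MM psd.nonneg
  have hWsym : Wᵀ = W := by
    have h1 : W.IsHermitian := (Matrix.nonneg_iff_posSemidef.1 (CFC.sqrt_nonneg MM)).1
    rw [← Matrix.conjTranspose_eq_transpose_of_trivial]
    exact h1
  have hWdet : IsUnit W.det := by
    have h2 : W.det * W.det = MM.det := by rw [← Matrix.det_mul, hW2]
    have h3 : 0 < MM.det := hMpd.det_pos
    apply isUnit_iff_ne_zero.2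
    intro h0
    rw [h0, mul_zero] at h2
    linarith
  clear_value W
  have hWW : W * W⁻¹ = 1 := Matrix.mul_nonsing_inv W hWdet
  have hWW' : W⁻¹ * W = 1 := Matrix.nonsing_inv_mul W hWdet
  have hWinvT : (W⁻¹)ᵀ = W⁻¹ := by rw [Matrix.transpose_nonsing_inv, hWsym]
  -- the affine isometric action
  set AA : G → Matrix (Fin n) (Fin n) ℝ := fun g => W * ρ g * W⁻¹ with hAAdef
  have hAA : ∀ g, AA g = W * ρ g * W⁻¹ := fun _ => rfl
  clear_value AA
  have hAAmul : ∀ g h : G, AA g * AA h = AA (g * h) := by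
    intro g h
    rw [hAA, hAA, hAA, hρmul]
    calc (W * ρ g * W⁻¹) * (W * ρ h * W⁻¹)
        = W * ρ g * (W⁻¹ * W) * (ρ h * W⁻¹) := by noncomm_ring
      _ = W * (ρ g * ρ h) * W⁻¹ := by rw [hWW']; noncomm_ring
  have hAA1 : AA 1 = 1 := by rw [hAA, hρ1, mul_one, hWW]
  have hAAW : ∀ g : G, AA g * W = W * ρ g := by
    intro g
    rw [hAA]
    calc W * ρ g * W⁻¹ * W = W * ρ g * (W⁻¹ * W) := by noncomm_ring
      _ = W * ρ g := by rw [hWW', mul_one]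
  set ttau : G → (Fin n → ℝ) := fun g => W *ᵥ tt g with httaudef
  have httau : ∀ g, ttau g = W *ᵥ tt g := fun _ => rfl
  clear_value ttau
  set Ψf : G → EuclideanSpace ℝ (Fin n) → EuclideanSpace ℝ (Fin n) :=
    fun g x => crysToE (AA g *ᵥ x + ttau g) with hΨfdef
  have hΨf : ∀ g x, Ψf g x = crysToE (AA g *ᵥ x + ttau g) := fun _ _ => rfl
  clear_value Ψf
  have hcto : ∀ (B : Matrix (Fin n) (Fin n) ℝ) (w : Fin n → ℝ),
      B *ᵥ (crysToE w) = B *ᵥ w := fun _ _ => rfl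
  have hΨcomp : ∀ (g h : G) (x : EuclideanSpace ℝ (Fin n)), Ψf g (Ψf h x) = Ψf (g * h) x := by
    intro g h x
    rw [hΨf, hΨf, hΨf, hcto]
    congr 1
    rw [Matrix.mulVec_add, Matrix.mulVec_mulVec, hAAmul]
    have h1 : AA g *ᵥ ttau h + ttau g = ttau (g * h) := by
      rw [httau, httau, httau, Matrix.mulVec_mulVec, hAAW, ← Matrix.mulVec_mulVec,
        ← Matrix.mulVec_add, htt_hom]
      congr 1
      abel
    rw [add_assoc, h1]
  have httau1 : ttau 1 = 0 := by rw [httau, htt1, Matrix.mulVec_zero]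
  have hΨ1 : ∀ x : EuclideanSpace ℝ (Fin n), Ψf 1 x = x := by
    intro x
    rw [hΨf, hAA1, Matrix.one_mulVec, httau1, add_zero]
    rfl
  have hATA : ∀ g : G, (AA g)ᵀ * AA g = 1 := by
    intro g
    have h1 : (AA g)ᵀ = W⁻¹ * (ρ g)ᵀ * W := by
      rw [hAA, Matrix.transpose_mul, Matrix.transpose_mul, hWinvT, hWsym]
      noncomm_ring
    rw [h1, hAA]
    calc W⁻¹ * (ρ g)ᵀ * W * (W * ρ g * W⁻¹)
        = W⁻¹ * ((ρ g)ᵀ * (W * W) * ρ g) * W⁻¹ := by noncomm_ring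
      _ = W⁻¹ * ((ρ g)ᵀ * MM * ρ g) * W⁻¹ := by rw [hW2]
      _ = W⁻¹ * MM * W⁻¹ := by rw [hMinv]
      _ = W⁻¹ * (W * W) * W⁻¹ := by rw [hW2]
      _ = (W⁻¹ * W) * (W * W⁻¹) := by noncomm_ring
      _ = 1 := by rw [hWW', hWW, one_mul]
  have hAnorm : ∀ (g : G) (v : Fin n → ℝ), ‖crysToE (AA g *ᵥ v)‖ = ‖crysToE v‖ := by
    intro g v
    rw [crys_normE, crys_normE]
    congr 1
    rw [crys_dot_shift, Matrix.mulVec_mulVec, hATA, Matrix.one_mulVec]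
  have hΨdist : ∀ (g : G) (x y : EuclideanSpace ℝ (Fin n)),
      dist (Ψf g x) (Ψf g y) = dist x y := by
    intro g x y
    have hxy : ∀ a b : Fin n → ℝ, crysToE a - crysToE b = crysToE (a - b) := fun _ _ => rfl
    have h2 : Ψf g x - Ψf g y = crysToE (AA g *ᵥ ((x : Fin n → ℝ) - (y : Fin n → ℝ))) := by
      rw [hΨf, hΨf, hxy]
      congr 1
      rw [Matrix.mulVec_sub]
      abel
    have h3 : x - y = crysToE ((x : Fin n → ℝ) - (y : Fin n → ℝ)) := rfl
    rw [dist_eq_norm, dist_eq_norm, h2, h3, hAnorm]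
  have hinvmul : ∀ g : G, g⁻¹ * g = 1 := fun g => by group
  have hmulinv : ∀ g : G, g * g⁻¹ = 1 := fun g => by group
  set Ψe : G → (EuclideanSpace ℝ (Fin n) ≃ᵢ EuclideanSpace ℝ (Fin n)) := fun g =>
    { toFun := Ψf g
      invFun := Ψf g⁻¹
      left_inv := fun x => by rw [hΨcomp, hinvmul, hΨ1]
      right_inv := fun x => by rw [hΨcomp, hmulinv, hΨ1]
      isometry_toFun := Isometry.of_dist_eq (fun x y => hΨdist g x y) } with hΨedef
  have hΨe : ∀ (g : G) (x : EuclideanSpace ℝ (Fin n)), Ψe g x = Ψf g x := fun _ _ => rfl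
  set Ψ : G →* (EuclideanSpace ℝ (Fin n) ≃ᵢ EuclideanSpace ℝ (Fin n)) :=
    MonoidHom.mk' (fun g => Ψe g) (by
      intro a b
      apply IsometryEquiv.ext
      intro x
      show Ψf (a * b) x = Ψf a (Ψf b x)
      rw [hΨcomp]) with hΨdef
  have hΨ : ∀ (g : G) (x : EuclideanSpace ℝ (Fin n)), (Ψ g : _ ≃ᵢ _) x = Ψf g x :=
    fun _ _ => rfl
  -- kernel is trivial
  have hker : ∀ g : G, g ∈ Ψ.ker → g ∈ L → g = 1 := by
    intro g hgk hgL
    have h1 : Ψf g 0 = 0 := by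
      have h0 : Ψ g = 1 := hgk
      rw [← hΨ g 0, h0]
      rfl
    have h2 : crysToE (ttau g) = 0 := by
      rw [hΨf, WithLp.ofLp_zero, Matrix.mulVec_zero, zero_add] at h1
      exact h1
    have h3 : ttau g = 0 := congrArg WithLp.ofLp h2
    have h4 : tt g = 0 := by
      have h5 : W⁻¹ *ᵥ (W *ᵥ tt g) = W⁻¹ *ᵥ (0 : Fin n → ℝ) := by rw [← httau, h3]
      rw [Matrix.mulVec_mulVec, hWW', Matrix.one_mulVec, Matrix.mulVec_zero] at h5
      exact h5
    have h6 : φp (⟨g, hgL⟩ : L) = 0 := by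
      rw [← htt_L ⟨g, hgL⟩]
      exact h4
    have h7 : (⟨g, hgL⟩ : L) = 1 := by
      apply hφpinj
      rw [h6, hφp1]
    exact congrArg Subtype.val h7
  have hkerfin : Finite Ψ.ker := by
    have hinjk : Function.Injective (fun k : Ψ.ker => π (k : G)) := by
      intro k₁ k₂ hk
      have h1 : ((k₁ : G)⁻¹ * (k₂ : G)) ∈ L := by
        apply hmemL
        rw [_root_.map_mul, _root_.map_inv]
        simp only at hk
        rw [hk]
        group
      have h2 : ((k₁ : G)⁻¹ * (k₂ : G)) ∈ Ψ.ker :=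
        Ψ.ker.mul_mem (Ψ.ker.inv_mem k₁.2) k₂.2
      have h3 := hker _ h2 h1
      have h4 : (k₁ : G) = (k₂ : G) := by
        have := congrArg (fun x => (k₁ : G) * x) h3
        simpa [mul_assoc] using this.symm
      exact Subtype.ext h4
    exact Finite.of_injective _ hinjk
  have hkerbot : Ψ.ker = ⊥ := hG Ψ.ker (MonoidHom.normal_ker Ψ) hkerfin
  have hΨinj : Function.Injective Ψ := (MonoidHom.ker_eq_bot_iff Ψ).1 hkerbot
  refine ⟨Ψ.range, ⟨MonoidHom.ofInjective hΨinj⟩, ?_, ?_⟩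
  · -- proper discontinuity
    constructor
    intro K Lc hK hLc
    obtain ⟨R₁, hR₁⟩ := hK.isBounded.subset_closedBall 0
    obtain ⟨R₂, hR₂⟩ := hLc.isBounded.subset_closedBall 0
    obtain ⟨CW, hCW0, hCW⟩ := crys_opBound (W⁻¹)
    -- bound on b
    set Cb : ℝ := ∑ q : G ⧸ L, ‖crysToE (bb (sec q))‖ with hCbdef
    have hbbound : ∀ g : G, ‖crysToE (bb g)‖ ≤ Cb := by
      intro g
      have h1 : bb g = bb (sec (π g)) := by
        conv_lhs => rw [← hdec g]
        rw [hbb_right]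
      rw [h1]
      exact Finset.single_le_sum (f := fun q => ‖crysToE (bb (sec q))‖)
        (fun q _ => norm_nonneg _) (Finset.mem_univ (π g))
    -- operator norm bounds for the ρ (sec q)⁻¹
    set Cp : (G ⧸ L) → ℝ := fun q => (crys_opBound (ρ ((sec q)⁻¹))).choose with hCpdef
    have hCp : ∀ q, 0 ≤ Cp q ∧
        ∀ v : EuclideanSpace ℝ (Fin n), ‖crysToE (ρ ((sec q)⁻¹) *ᵥ v)‖ ≤ Cp q * ‖v‖ :=
      fun q => (crys_opBound (ρ ((sec q)⁻¹))).choose_spec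
    set Cρ : ℝ := ∑ q : G ⧸ L, Cp q with hCρdef
    have hCρ : ∀ q, Cp q ≤ Cρ :=
      fun q => Finset.single_le_sum (f := Cp) (fun r _ => (hCp r).1) (Finset.mem_univ q)
    have hCρ0 : 0 ≤ Cρ := Finset.sum_nonneg (fun q _ => (hCp q).1)
    set B₁ : ℝ := CW * (R₁ + R₂) + Cb with hB₁def
    set Cstar : ℝ := Cρ * B₁ with hCstardef
    -- the set of candidate group elements
    set TG : Set G := {g : G | ‖crysToE (ttau g)‖ ≤ R₁ + R₂} with hTGdef
    have hTGfin : TG.Finite := by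
      -- bound on the lattice part
      have hbound : ∀ g ∈ TG, ∀ i, |(zc (lot g) i : ℝ)| ≤ Cstar := by
        intro g hg i
        have h1 : ‖crysToE (tt g)‖ ≤ CW * (R₁ + R₂) := by
          have h2 : tt g = W⁻¹ *ᵥ ttau g := by
            rw [httau, Matrix.mulVec_mulVec, hWW', Matrix.one_mulVec]
          have h3 : ‖crysToE (tt g)‖ ≤ CW * ‖crysToE (ttau g)‖ := by
            rw [h2]
            exact hCW (crysToE (ttau g))
          calc ‖crysToE (tt g)‖ ≤ CW * ‖crysToE (ttau g)‖ := h3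
            _ ≤ CW * (R₁ + R₂) := by
                apply mul_le_mul_of_nonneg_left _ hCW0
                exact hg
        have h4 : ‖crysToE (u g)‖ ≤ B₁ := by
          have h5 : u g = tt g - bb g := by rw [htt]; abel
          have h6 : crysToE (u g) = crysToE (tt g) - crysToE (bb g) := by
            rw [h5, crysToE_sub]
          rw [h6]
          calc ‖crysToE (tt g) - crysToE (bb g)‖
              ≤ ‖crysToE (tt g)‖ + ‖crysToE (bb g)‖ := norm_sub_le _ _
            _ ≤ CW * (R₁ + R₂) + Cb := add_le_add h1 (hbbound g)
        have h7 : φp (lot g) = ρ ((sec (π g))⁻¹) *ᵥ u g := by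
          rw [hu g, Matrix.mulVec_mulVec, ← hρmul, hinvmul, hρ1, Matrix.one_mulVec]
        calc |(zc (lot g) i : ℝ)| = |crysToE (φp (lot g)) i| := by
              rw [crysToE_apply, hzcp]
          _ ≤ ‖crysToE (φp (lot g))‖ := crys_coord_le _ i
          _ = ‖crysToE (ρ ((sec (π g))⁻¹) *ᵥ crysToE (u g))‖ := by rw [hcto, ← h7]
          _ ≤ Cp (π g) * ‖crysToE (u g)‖ := (hCp (π g)).2 (crysToE (u g))
          _ ≤ Cρ * B₁ := by
              apply mul_le_mul (hCρ (π g)) h4 (norm_nonneg _) hCρ0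
          _ = Cstar := rfl
      have hinjTG : Set.InjOn (fun g => (π g, zc (lot g))) TG := by
        intro g₁ h1 g₂ h2 heq
        simp only [Prod.mk.injEq] at heq
        obtain ⟨hq, hz⟩ := heq
        have hφeq : φp (lot g₁) = φp (lot g₂) := by
          funext i
          rw [hzcp, hzcp, hz]
        have hlz : lot g₁ = lot g₂ := hφpinj hφeq
        calc g₁ = sec (π g₁) * (lot g₁ : G) := (hdec g₁).symm
          _ = sec (π g₂) * (lot g₂ : G) := by rw [hq, hlz]
          _ = g₂ := hdec g₂
      apply Set.Finite.of_finite_image _ hinjTG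
      apply Set.Finite.subset (Set.Finite.prod (Set.finite_univ)
        (crys_intvec_finite n Cstar))
      rintro ⟨q, v⟩ ⟨g, hg, hgv⟩
      constructor
      · exact Set.mem_univ _
      · have h1 : v = zc (lot g) := (congrArg Prod.snd hgv).symm
        intro i
        rw [h1]
        exact hbound g hg i
    -- the γ-set is contained in the image of TG
    have hsub : {γ : Ψ.range | ((γ • ·) '' K ∩ Lc ≠ ∅)}
        ⊆ (fun g => (⟨Ψ g, ⟨g, rfl⟩⟩ : Ψ.range)) '' TG := by
      intro γ hγ
      obtain ⟨g, hg⟩ := γ.2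
      refine ⟨g, ?_, Subtype.ext hg⟩
      have hne : ((fun x => γ • x) '' K ∩ Lc).Nonempty := Set.nonempty_iff_ne_empty.2 hγ
      obtain ⟨y, ⟨x, hxK, hyx⟩, hyL⟩ := hne
      have hy : y = Ψf g x := by
        rw [← hyx]
        show (γ : _ ≃ᵢ _) x = Ψf g x
        rw [← hg, hΨ]
      have hx0 : dist x 0 ≤ R₁ := by
        have h9 := hR₁ hxK; rwa [Metric.mem_closedBall] at h9
      have hy0 : dist y 0 ≤ R₂ := by
        have h9 := hR₂ hyL; rwa [Metric.mem_closedBall] at h9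
      have hΨg0 : Ψf g 0 = crysToE (ttau g) := by
        rw [hΨf, WithLp.ofLp_zero, Matrix.mulVec_zero, zero_add]
      show ‖crysToE (ttau g)‖ ≤ R₁ + R₂
      have h5 : dist (Ψf g 0) (Ψf g x) = dist 0 x := hΨdist g 0 x
      calc ‖crysToE (ttau g)‖ = dist (Ψf g 0) 0 := by rw [hΨg0, dist_zero_right]
        _ ≤ dist (Ψf g 0) (Ψf g x) + dist (Ψf g x) 0 := dist_triangle _ _ _
        _ = dist 0 x + dist y 0 := by rw [h5, ← hy]
        _ ≤ R₁ + R₂ := by rw [dist_comm 0 x]; exact add_le_add hx0 hy0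
    exact Set.Finite.subset (hTGfin.image _)
      (fun γ hγ => hsub (Set.nonempty_iff_ne_empty.1 hγ))
  · -- cocompactness
    obtain ⟨CWp, hCWp0, hCWp⟩ := crys_opBound W
    set Cc : ℝ := CWp * Real.sqrt (n * (m:ℝ)^2) with hCcdef
    have horbit : ∀ x : EuclideanSpace ℝ (Fin n), ∃ l : L, ‖Ψf (l : G) x‖ ≤ Cc := by
      intro x
      set y : Fin n → ℝ := W⁻¹ *ᵥ x with hydef
      set k : Fin n → ℤ := fun i => -round (y i / m) with hkdef
      set l : L := ∏ i, lm i ^ k i with hldef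
      refine ⟨l, ?_⟩
      have hAl : AA (l : G) = 1 := by rw [hAA, hρL, mul_one, hWW]
      have h1 : Ψf (l : G) x = crysToE (W *ᵥ (y + φp l)) := by
        rw [hΨf, hAl, Matrix.one_mulVec, httau, htt_L]
        congr 1
        rw [Matrix.mulVec_add]
        have h2 : W *ᵥ y = (x : Fin n → ℝ) := by
          rw [hydef, Matrix.mulVec_mulVec, hWW, Matrix.one_mulVec]
        rw [h2]
      rw [h1]
      have hmp : (0:ℝ) < m := by exact_mod_cast hm
      have h3 : ∀ i, |(y + φp l) i| ≤ (m : ℝ) := by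
        intro i
        have h4 : φp l i = (k i : ℝ) * m := hφprodp k i
        have h5 : (y + φp l) i = y i + (k i : ℝ) * m := by
          rw [Pi.add_apply, h4]
        rw [h5, hkdef]
        push_cast
        have h6 := abs_sub_round (y i / m)
        have h7 : y i + (-(round (y i / (m:ℝ)) : ℝ)) * m
            = (y i / m - round (y i / m)) * m := by
          field_simp
          ring
        rw [h7, abs_mul, abs_of_pos hmp]
        calc |y i / m - round (y i / m)| * m ≤ (1/2) * m := by
              apply mul_le_mul_of_nonneg_right h6 (le_of_lt hmp)
          _ ≤ m := by linarith
      have h8 : ‖crysToE (y + φp l)‖ ≤ Real.sqrt (n * (m:ℝ)^2) := by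
        apply crys_norm_le
        intro i
        rw [crysToE_apply]
        exact h3 i
      calc ‖crysToE (W *ᵥ (y + φp l))‖
          = ‖crysToE (W *ᵥ (crysToE (y + φp l)))‖ := rfl
        _ ≤ CWp * ‖crysToE (y + φp l)‖ := hCWp _
        _ ≤ CWp * Real.sqrt (n * (m:ℝ)^2) := mul_le_mul_of_nonneg_left h8 hCWp0
    constructor
    have himg : Quotient.mk (MulAction.orbitRel Ψ.range (EuclideanSpace ℝ (Fin n))) ''
        (Metric.closedBall 0 Cc) = Set.univ := by
      apply Set.eq_univ_of_forall
      intro q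
      obtain ⟨x, rfl⟩ := Quotient.exists_rep q
      obtain ⟨l, hl⟩ := horbit x
      refine ⟨Ψf (l : G) x, ?_, ?_⟩
      · rw [Metric.mem_closedBall, dist_zero_right]; exact hl
      · apply Quotient.sound
        show Ψf (l:G) x ∈ MulAction.orbit _ x
        refine ⟨(⟨Ψ (l : G), ⟨(l:G), rfl⟩⟩ : Ψ.range), ?_⟩
        show (Ψ (l:G) : _ ≃ᵢ _) x = Ψf (l:G) x
        rw [hΨ]
    rw [← himg]
    exact (isCompact_closedBall 0 Cc).image continuous_quot_mk

theorem bwd_inst (n : ℕ) (G : Type*) [Group G]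
    (hvfa : ∃ N : Subgroup G, N.FiniteIndex ∧ Nonempty (N ≃* Multiplicative (Fin n → ℤ)))
    (hG : ∀ N : Subgroup G, N.Normal → Finite N → N = ⊥) :
    IsCrystallographicGeom n G := by
  classical
  obtain ⟨N, hNfi, ⟨e⟩⟩ := hvfa
  haveI := hNfi
  set L : Subgroup G := N.normalCore with hLdef
  haveI : L.Normal := Subgroup.normalCore_normal N
  haveI : L.FiniteIndex := Subgroup.finiteIndex_normalCore N
  have hLN : L ≤ N := N.normalCore_le
  haveI : (L.subgroupOf N).Normal := Subgroup.normal_subgroupOf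
  haveI : (L.subgroupOf N).FiniteIndex := Subgroup.instFiniteIndex_subgroupOf L N
  set φ : L → EuclideanSpace ℝ (Fin n) := fun l =>
    crysToE (fun i => ((Multiplicative.toAdd (e (Subgroup.inclusion hLN l)) i : ℤ) : ℝ))
    with hφdef
  have hφap : ∀ (l : L) (i : Fin n),
      φ l i = ((Multiplicative.toAdd (e (Subgroup.inclusion hLN l)) i : ℤ) : ℝ) :=
    fun _ _ => rfl
  have hadd : ∀ a b : L, φ (a * b) = φ a + φ b := by
    intro a b
    rw [hφdef]
    simp only
    rw [← crysToE_add]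
    apply WithLp.ofLp_injective
    funext i
    rw [crysToE_apply, crysToE_apply, Pi.add_apply, _root_.map_mul, _root_.map_mul,
      toAdd_mul, Pi.add_apply]
    push_cast
    ring
  have hinj : Function.Injective φ := by
    intro a b hab
    have h1 : ∀ i, (Multiplicative.toAdd (e (Subgroup.inclusion hLN a)) i : ℝ)
        = (Multiplicative.toAdd (e (Subgroup.inclusion hLN b)) i : ℝ) := by
      intro i
      have := congrFun (congrArg (fun (x : EuclideanSpace ℝ (Fin n)) => (x : Fin n → ℝ)) hab) i
      exact this
    have h2 : Multiplicative.toAdd (e (Subgroup.inclusion hLN a))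
        = Multiplicative.toAdd (e (Subgroup.inclusion hLN b)) := by
      funext i
      exact_mod_cast h1 i
    have h3 : e (Subgroup.inclusion hLN a) = e (Subgroup.inclusion hLN b) := h2
    have h4 : Subgroup.inclusion hLN a = Subgroup.inclusion hLN b := e.injective h3
    exact Subgroup.inclusion_injective hLN h4
  have hZ : ∀ (l : L) (i : Fin n), ∃ z : ℤ, φ l i = (z : ℝ) :=
    fun l i => ⟨Multiplicative.toAdd (e (Subgroup.inclusion hLN l)) i, rfl⟩
  set m : ℕ := (L.subgroupOf N).index with hmdef
  have hm : 0 < m := Nat.pos_of_ne_zero Subgroup.FiniteIndex.index_ne_zero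
  set xi : Fin n → N := fun i => e.symm (Multiplicative.ofAdd (Pi.single i 1)) with hxidef
  have hmem : ∀ i, ((xi i ^ m : N) : G) ∈ L := by
    intro i
    have h1 : (xi i ^ m : N) ∈ L.subgroupOf N := Subgroup.pow_index_mem (L.subgroupOf N) (xi i)
    exact (Subgroup.mem_subgroupOf).1 h1
  set lm : Fin n → L := fun i => ⟨((xi i ^ m : N) : G), hmem i⟩ with hlmdef
  have hincl : ∀ i : Fin n, Subgroup.inclusion hLN (lm i) = xi i ^ m := by
    intro i
    apply Subtype.ext
    rfl
  have hlm : ∀ i j, φ (lm i) j = if j = i then (m : ℝ) else 0 := by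
    intro i j
    rw [hφap, hincl, map_pow, hxidef]
    simp only [MulEquiv.apply_symm_apply]
    rw [toAdd_pow, toAdd_ofAdd]
    rw [Pi.smul_apply, Pi.single_apply]
    by_cases hji : j = i <;> simp [hji]
  exact bwd_aux n G L φ hadd hinj hZ m hm lm hlm hG


open Metric in
lemma fwd_aux (n : ℕ) (G : Type*) [Group G] (hc : IsCrystallographicGeom n G) :
    ∀ N : Subgroup G, N.Normal → Finite N → N = ⊥ := by
  classical
  obtain ⟨Γ, ⟨h⟩, _hpd, hcpt⟩ := hc
  set E := EuclideanSpace ℝ (Fin n) with hE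
  intro N hN hfin
  by_contra hbot
  obtain ⟨g₀, hg₀N, hg₀⟩ : ∃ g ∈ N, g ≠ 1 := by
    by_contra hx
    push_neg at hx
    exact hbot ((Subgroup.eq_bot_iff_forall N).2 hx)
  -- the homomorphism G →* (E ≃ᵢ E)
  let embHom : G →* (E ≃ᵢ E) := Γ.subtype.comp h.toMonoidHom
  have embinj : Function.Injective embHom := Subtype.coe_injective.comp h.injective
  let emb : G → (E ≃ᵢ E) := embHom
  let Fs : Set (E ≃ᵢ E) := emb '' (N : Set G)
  have hFsfin : Fs.Finite := (N : Set G).toFinite.image _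
  have hFs_mul : ∀ f ∈ Fs, ∀ f' ∈ Fs, f * f' ∈ Fs := by
    rintro _ ⟨a, ha, rfl⟩ _ ⟨b, hb, rfl⟩
    exact ⟨a * b, N.mul_mem ha hb, map_mul embHom a b⟩
  have hFs_inv : ∀ f ∈ Fs, f⁻¹ ∈ Fs := by
    rintro _ ⟨a, ha, rfl⟩
    exact ⟨a⁻¹, N.inv_mem ha, map_inv embHom a⟩
  have hFs_one : (1 : E ≃ᵢ E) ∈ Fs := ⟨1, N.one_mem, map_one embHom⟩
  -- affine structure of isometries
  have haffine : ∀ (f : E ≃ᵢ E) (x : E), f x = f.toRealLinearIsometryEquiv x + f 0 := by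
    intro f x
    rw [IsometryEquiv.toRealLinearIsometryEquiv_apply]
    abel
  set T : Finset (E ≃ᵢ E) := hFsfin.toFinset with hT
  have hTmem : ∀ f, f ∈ T ↔ f ∈ Fs := fun f => hFsfin.mem_toFinset
  have hTne : T.Nonempty := ⟨1, (hTmem 1).2 hFs_one⟩
  have hcard : (0 : ℝ) < (T.card : ℝ) := by
    exact_mod_cast Finset.card_pos.2 hTne
  set x₀ : E := ((T.card : ℝ))⁻¹ • ∑ f ∈ T, f 0 with hx₀def
  -- x₀ is fixed by all of Fs
  have hfix : ∀ f ∈ Fs, f x₀ = x₀ := by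
    intro f hf
    have hre : ∑ f' ∈ T, f (f' 0) = ∑ f' ∈ T, f' 0 := by
      apply Finset.sum_nbij' (fun f' => f * f') (fun f' => f⁻¹ * f')
      · intro a ha; exact (hTmem _).2 (hFs_mul f hf a ((hTmem _).1 ha))
      · intro a ha; exact (hTmem _).2 (hFs_mul _ (hFs_inv f hf) a ((hTmem _).1 ha))
      · intro a _; simp [mul_assoc]
      · intro a _; simp [mul_assoc]
      · intro a _; rfl
    calc f x₀ = f.toRealLinearIsometryEquiv x₀ + f 0 := haffine f x₀
      _ = ((T.card : ℝ))⁻¹ • ∑ f' ∈ T, f.toRealLinearIsometryEquiv (f' 0) + f 0 := by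
          rw [hx₀def, map_smul, map_sum]
      _ = ((T.card : ℝ))⁻¹ • ∑ f' ∈ T, (f.toRealLinearIsometryEquiv (f' 0) + f 0) := by
          rw [Finset.sum_add_distrib, smul_add]
          congr 1
          rw [Finset.sum_const, ← Nat.cast_smul_eq_nsmul ℝ, smul_smul,
            inv_mul_cancel₀ (ne_of_gt hcard), one_smul]
      _ = ((T.card : ℝ))⁻¹ • ∑ f' ∈ T, f (f' 0) := by
          congr 1; apply Finset.sum_congr rfl; intro f' _; rw [← haffine]
      _ = x₀ := by rw [hre, hx₀def]
  -- the fixed set A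
  set A : Set E := {x : E | ∀ f ∈ Fs, f x = x} with hA
  have hx₀A : x₀ ∈ A := hfix
  have hAne : A.Nonempty := ⟨x₀, hx₀A⟩
  clear_value x₀
  have hAclosed : IsClosed A := by
    have : A = ⋂ f ∈ Fs, {x : E | f x = x} := by
      ext x; simp [hA, Set.mem_iInter]
    rw [this]
    exact isClosed_biInter fun f _ => isClosed_eq f.continuous continuous_id
  -- A is affinely closed
  have haffA : ∀ x ∈ A, ∀ y ∈ A, ∀ t : ℝ, x + t • (y - x) ∈ A := by
    intro x hx y hy t f hf
    have hfx : f x = x := hx f hf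
    have hfy : f y = y := hy f hf
    have h1 : f (x + t • (y - x)) =
        f.toRealLinearIsometryEquiv (x + t • (y - x)) + f 0 := haffine _ _
    have h2 : f.toRealLinearIsometryEquiv (x + t • (y - x)) =
        f.toRealLinearIsometryEquiv x +
          t • (f.toRealLinearIsometryEquiv y - f.toRealLinearIsometryEquiv x) := by
      simp [map_add, map_smul, map_sub]
    have hfx' : f.toRealLinearIsometryEquiv x = f x - f 0 :=
      IsometryEquiv.toRealLinearIsometryEquiv_apply f x
    have hfy' : f.toRealLinearIsometryEquiv y = f y - f 0 :=
      IsometryEquiv.toRealLinearIsometryEquiv_apply f y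
    rw [h1, h2, hfx', hfy', hfx, hfy]
    rw [sub_sub_sub_cancel_right]
    abel
  -- a point not in A
  obtain ⟨z, hz⟩ : ∃ z : E, emb g₀ z ≠ z := by
    by_contra hzz
    push_neg at hzz
    have h1 : embHom g₀ = embHom 1 := by
      rw [map_one]; exact IsometryEquiv.ext hzz
    exact hg₀ (embinj h1)
  have hzA : z ∉ A := fun hmem => hz (hmem (emb g₀) ⟨g₀, hg₀N, rfl⟩)
  have hd₀ : 0 < infDist z A := (hAclosed.notMem_iff_infDist_pos hAne).1 hzA
  set d₀ : ℝ := infDist z A with hd₀def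
  -- A is Γ-invariant
  have hstep : ∀ g : G, ∀ x ∈ A, emb g x ∈ A := by
    rintro g x hx _ ⟨b, hb, rfl⟩
    have hconj : g⁻¹ * b * g ∈ N := by
      simpa using hN.conj_mem b hb g⁻¹
    have : emb b * emb g = emb g * emb (g⁻¹ * b * g) := by
      rw [← map_mul, ← map_mul]
      congr 1
      group
    calc emb b (emb g x) = (emb b * emb g) x := rfl
      _ = (emb g * emb (g⁻¹ * b * g)) x := by rw [this]
      _ = emb g (emb (g⁻¹ * b * g) x) := rfl
      _ = emb g x := by rw [hx _ ⟨g⁻¹ * b * g, hconj, rfl⟩]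
  have hAinv : ∀ γ : Γ, (γ : E ≃ᵢ E) '' A = A := by
    intro γ
    obtain ⟨g, hg⟩ := h.surjective γ
    have hcoe : (γ : E ≃ᵢ E) = emb g := by rw [← hg]; rfl
    apply Set.Subset.antisymm
    · rintro _ ⟨x, hx, rfl⟩
      rw [hcoe]; exact hstep g x hx
    · intro x hx
      refine ⟨(γ : E ≃ᵢ E).symm x, ?_, by simp⟩
      have hcoe' : ((γ⁻¹ : Γ) : E ≃ᵢ E) = emb g⁻¹ := by
        rw [← hg]; simp [emb, embHom, map_inv]
      have : (γ : E ≃ᵢ E).symm x = emb g⁻¹ x := by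
        rw [← hcoe']
        rfl
      rw [this]
      exact hstep g⁻¹ x hx
  -- the induced function on the quotient
  have hinvar : ∀ a b : E, (MulAction.orbitRel Γ E).r a b → infDist a A = infDist b A := by
    intro a b hab
    obtain ⟨γ, hγ⟩ := hab
    have : a = (γ : E ≃ᵢ E) b := by rw [← hγ]; rfl
    rw [this]
    conv_lhs => rw [← hAinv γ]
    exact infDist_image (γ : E ≃ᵢ E).isometry
  let fq : Quotient (MulAction.orbitRel Γ E) → ℝ :=
    fun q => Quotient.liftOn' q (fun x => infDist x A) hinvar
  have hfqcont : Continuous fq := by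
    apply Continuous.quotient_liftOn'
    exact continuous_infDist_pt A
  have hEnon : Nonempty (Quotient (MulAction.orbitRel Γ E)) := ⟨Quotient.mk'' 0⟩
  obtain ⟨qm, -, hqm⟩ := isCompact_univ.exists_isMaxOn (Set.univ_nonempty)
    hfqcont.continuousOn
  set R : ℝ := fq qm with hR
  -- unboundedness: the point x₀ + t (z - x₀) has distance ≥ t d₀ from A
  have hgrow : ∀ t : ℝ, 1 ≤ t → t * d₀ ≤ infDist (x₀ + t • (z - x₀)) A := by
    intro t ht
    have ht0 : 0 < t := lt_of_lt_of_le one_pos ht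
    by_contra hlt
    push_neg at hlt
    obtain ⟨a, haA, hdist⟩ := (infDist_lt_iff hAne).1 hlt
    have ha' : x₀ + t⁻¹ • (a - x₀) ∈ A := haffA x₀ hx₀A a haA t⁻¹
    have hkey : dist (x₀ + t • (z - x₀)) a = t * dist z (x₀ + t⁻¹ • (a - x₀)) := by
      rw [dist_eq_norm, dist_eq_norm, ← norm_smul_of_nonneg (le_of_lt ht0)]
      congr 1
      rw [smul_sub, smul_sub, smul_add, smul_smul, mul_inv_cancel₀ (ne_of_gt ht0), one_smul]
      abel
    have : t * d₀ ≤ dist (x₀ + t • (z - x₀)) a := by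
      rw [hkey]
      have := infDist_le_dist_of_mem (x := z) ha'
      nlinarith [hd₀]
    linarith
  -- contradiction
  set t : ℝ := max 1 ((R + 1) / d₀) with htdef
  have ht1 : 1 ≤ t := le_max_left _ _
  have ht2 : (R + 1) / d₀ ≤ t := le_max_right _ _
  have hlarge : R + 1 ≤ t * d₀ := by
    rw [div_le_iff₀ hd₀] at ht2
    linarith
  have hle : infDist (x₀ + t • (z - x₀)) A ≤ R :=
    hqm (Set.mem_univ (Quotient.mk'' (x₀ + t • (z - x₀))))
  have := hgrow t ht1
  linarith

/-- A virtually free abelian group of rank `n ≥ 1` is isomorphic to an `n`-dimensional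
crystallographic group (a discrete cocompact subgroup of the isometry group of `ℝⁿ`) if
and only if it has no nontrivial finite normal subgroup. -/
theorem crystallographic_iff_no_finite_normal_subgroup
    (n : ℕ) (hn : 1 ≤ n) (G : Type*) [Group G]
    (hvfa : ∃ N : Subgroup G, N.FiniteIndex ∧ Nonempty (N ≃* Multiplicative (Fin n → ℤ))) :
    IsCrystallographicGeom n G ↔
      (∀ N : Subgroup G, N.Normal → Finite N → N = ⊥) := by
  constructor
  · exact fwd_aux n G
  · exact fun hG => bwd_inst n G hvfa hG
end

section
/- Let G be a finitely generated residually finite group and let ι: G → Ĝ be the canonical homomorphism to its profinite completion. If N is a finite normal subgroup of G, then ι(N) is a normal subgroup of Ĝ. -/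
/-- If `G` is a finitely generated residually finite group and `N` is a finite normal
subgroup of `G`, then `ι(N)` is a normal subgroup of the profinite completion `Ĝ`. -/
theorem image_of_finite_normal_subgroup_normal_in_completion
    (G : Type*) [Group G] (hGfg : Group.FG G) (hGrf : ResiduallyFinite G)
    (N : Subgroup G) (hN : N.Normal) (hNfin : Finite N) :
    (N.map (profiniteIota G)).Normal := by
  constructor
  rintro _ ⟨m, hm, rfl⟩ x
  have hS : ((profiniteMap G) '' (N : Set G)).Finite :=
    (Set.toFinite (N : Set G)).image _
  have hcont : Continuous fun y : ProfiniteAmbient G => y * profiniteMap G m * y⁻¹ :=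
    (continuous_id.mul continuous_const).mul continuous_inv
  have hx : (x : ProfiniteAmbient G) ∈ closure (Set.range (profiniteMap G)) := x.2
  have key : (x : ProfiniteAmbient G) ∈
      (fun y => y * profiniteMap G m * y⁻¹) ⁻¹' (profiniteMap G '' (N : Set G)) := by
    refine closure_minimal ?_ (hS.isClosed.preimage hcont) hx
    rintro _ ⟨g, rfl⟩
    exact ⟨g * m * g⁻¹, hN.conj_mem m hm g, by simp⟩
  obtain ⟨k, hk, hkeq⟩ := key
  refine ⟨k, hk, ?_⟩
  apply Subtype.ext
  exact hkeq
end

section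
/- Let G be a finitely generated virtually free abelian group with canonical map ι: G → Ĝ to its profinite completion. Then every finite subgroup H of Ĝ is conjugate in Ĝ to a subgroup of ι(G), i.e. there exists b ∈ Ĝ with bHb⁻¹ ⊆ ι(G). -/
set_option linter.unusedSectionVars false

open scoped IsMulCommutative

namespace ProfConjAux



variable {G : Type*} [Group G]

theorem exists_good_normal (hGvfa : VirtuallyFreeAbelian G) :
    ∃ C : Subgroup G, C.Normal ∧ C.FiniteIndex ∧ IsMulCommutative C ∧ Group.FG ↥C ∧
      ∀ (x : ↥C) (k : ℕ), 0 < k → x ^ k = 1 → x = 1 := by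
  obtain ⟨n, N₀, hFI, ⟨e⟩⟩ := hGvfa
  haveI := hFI
  set j : ↥N₀.normalCore →* Multiplicative (Fin n → ℤ) :=
    e.toMonoidHom.comp (Subgroup.inclusion N₀.normalCore_le) with hj
  have hinj : Function.Injective j :=
    e.injective.comp (Subgroup.inclusion_injective _)
  refine ⟨N₀.normalCore, N₀.normalCore_normal, N₀.finiteIndex_normalCore, ?_, ?_, ?_⟩
  · exact ⟨⟨fun a b => hinj (by simp only [map_mul, mul_comm])⟩⟩
  · have hfgrange : Group.FG ↥j.range := by
      rw [Group.fg_iff_subgroup_fg, Subgroup.fg_iff_add_fg]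
      haveI : IsNoetherian ℤ (Additive (Multiplicative (Fin n → ℤ))) :=
        isNoetherian_of_linearEquiv
          (AddEquiv.toIntLinearEquiv
            ⟨Equiv.trans Multiplicative.ofAdd Additive.ofMul, fun _ _ => rfl⟩)
      have h1 : (AddSubgroup.toIntSubmodule j.range.toAddSubgroup).FG :=
        IsNoetherian.noetherian _
      rw [← AddSubgroup.toIntSubmodule_toAddSubgroup j.range.toAddSubgroup]
      exact (Submodule.fg_iff_addSubgroup_fg _).1 h1
    exact @Group.fg_of_surjective _ _ _ _ hfgrange (MonoidHom.ofInjective hinj).symm.toMonoidHom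
      (MonoidHom.ofInjective hinj).symm.surjective
  · intro x k hk hx
    apply hinj
    rw [map_one]
    have h1 : (j x) ^ k = 1 := by rw [← map_pow, hx, map_one]
    have h2 : k • Multiplicative.toAdd (j x) = 0 := by
      rw [← toAdd_pow, h1]; rfl
    have h3 : Multiplicative.toAdd (j x) = 0 := by
      funext i
      have := congrFun h2 i
      simpa [smul_eq_mul, hk.ne'] using this
    exact toAdd_eq_zero.mp h3


lemma approx3 (x : ProfiniteCompletion G) (M₁ M₂ M₃ : NormalFiniteIndexSubgroup G) :
    ∃ g : G, profiniteMap G g M₁ = (x : ProfiniteAmbient G) M₁ ∧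
      profiniteMap G g M₂ = (x : ProfiniteAmbient G) M₂ ∧
      profiniteMap G g M₃ = (x : ProfiniteAmbient G) M₃ := by
  have hx : (x : ProfiniteAmbient G) ∈
      closure ((profiniteMap G).range : Set (ProfiniteAmbient G)) := x.2
  set O : Set (ProfiniteAmbient G) :=
    ((fun y : ProfiniteAmbient G => y M₁) ⁻¹' {(x : ProfiniteAmbient G) M₁}) ∩
    ((fun y : ProfiniteAmbient G => y M₂) ⁻¹' {(x : ProfiniteAmbient G) M₂}) ∩
    ((fun y : ProfiniteAmbient G => y M₃) ⁻¹' {(x : ProfiniteAmbient G) M₃}) with hO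
  have hOopen : IsOpen O :=
    (((continuous_apply M₁).isOpen_preimage _ (isOpen_discrete _)).inter
      ((continuous_apply M₂).isOpen_preimage _ (isOpen_discrete _))).inter
      ((continuous_apply M₃).isOpen_preimage _ (isOpen_discrete _))
  have hmem : (x : ProfiniteAmbient G) ∈ O := by
    refine ⟨⟨rfl, rfl⟩, rfl⟩
  rcases mem_closure_iff.mp hx _ hOopen hmem with ⟨y, hy1, g, rfl⟩
  exact ⟨g, hy1.1.1, hy1.1.2, hy1.2⟩

variable (C : Subgroup G) [hN : C.Normal] [hFI : C.FiniteIndex] [hCC : IsMulCommutative C]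

def coordC : NormalFiniteIndexSubgroup G := ⟨C, ‹_›, ‹_›⟩

def piC : ProfiniteCompletion G →* G ⧸ C :=
  (Pi.evalMonoidHom _ (coordC C)).comp (profiniteCompletionSubgroup G).subtype

lemma piC_iota (g : G) : piC C (profiniteIota G g) = QuotientGroup.mk g := rfl

lemma coord_iota (g : G) (M : NormalFiniteIndexSubgroup G) :
    (profiniteIota G g : ProfiniteAmbient G) M = QuotientGroup.mk g := rfl

def KC : Subgroup (ProfiniteCompletion G) := (piC C).ker

lemma mem_KC {x : ProfiniteCompletion G} :
    x ∈ KC C ↔ (x : ProfiniteAmbient G) (coordC C) = 1 := Iff.rfl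

instance KC_isComm : IsMulCommutative (KC C) := by
  constructor
  constructor
  intro a b
  apply Subtype.ext
  apply Subtype.ext
  funext M
  obtain ⟨g1, hg1M, hg1C, -⟩ := approx3 (a : ProfiniteCompletion G) M (coordC C) (coordC C)
  obtain ⟨g2, hg2M, hg2C, -⟩ := approx3 (b : ProfiniteCompletion G) M (coordC C) (coordC C)
  have ha : a.1.1 (coordC C) = 1 := a.2
  have hb : b.1.1 (coordC C) = 1 := b.2
  have hg1mem : g1 ∈ C := by
    refine (QuotientGroup.eq_one_iff g1).mp ?_
    have := hg1C; rw [ha] at this; exact this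
  have hg2mem : g2 ∈ C := by
    refine (QuotientGroup.eq_one_iff g2).mp ?_
    have := hg2C; rw [hb] at this; exact this
  have hmulval : ((a * b : ↥(KC C)) : ProfiniteCompletion G).1 M = a.1.1 M * b.1.1 M := rfl
  have hmulval' : ((b * a : ↥(KC C)) : ProfiniteCompletion G).1 M = b.1.1 M * a.1.1 M := rfl
  rw [hmulval, hmulval', ← hg1M, ← hg2M]
  show QuotientGroup.mk' M.1 g1 * QuotientGroup.mk' M.1 g2
     = QuotientGroup.mk' M.1 g2 * QuotientGroup.mk' M.1 g1
  rw [← map_mul, ← map_mul, C.mul_comm_of_mem_isMulCommutative hg1mem hg2mem]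



def Cpow (C : Subgroup G) [IsMulCommutative C] (m : ℕ) : Subgroup G :=
  (C.subtype.comp (powMonoidHom m)).range

lemma mem_Cpow {C : Subgroup G} [IsMulCommutative C] {m : ℕ} {x : G} :
    x ∈ Cpow C m ↔ ∃ c : ↥C, (c : G) ^ m = x := by
  simp [Cpow, MonoidHom.mem_range, powMonoidHom]

lemma Cpow_le (C : Subgroup G) [IsMulCommutative C] (m : ℕ) : Cpow C m ≤ C := by
  intro x hx
  obtain ⟨c, rfl⟩ := mem_Cpow.mp hx
  exact pow_mem c.2 m

lemma Cpow_normal (C : Subgroup G) [IsMulCommutative C] [hN : C.Normal] (m : ℕ) :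
    (Cpow C m).Normal := by
  constructor
  intro x hx g
  obtain ⟨c, rfl⟩ := mem_Cpow.mp hx
  refine mem_Cpow.mpr ⟨⟨g * c * g⁻¹, hN.conj_mem _ c.2 g⟩, ?_⟩
  simp [conj_pow]

lemma Cpow_quot_finite (C : Subgroup G) [IsMulCommutative C] (hfg : Group.FG ↥C)
    {m : ℕ} (hm : 0 < m) : Finite (↥C ⧸ (Cpow C m).subgroupOf C) := by
  haveI := hfg
  haveI : Group.FG (↥C ⧸ (Cpow C m).subgroupOf C) :=
    Group.fg_of_surjective (f := QuotientGroup.mk' _) (QuotientGroup.mk'_surjective _)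
  apply CommGroup.finite_of_fg_torsion
  intro q
  obtain ⟨c, rfl⟩ := QuotientGroup.mk'_surjective _ q
  refine isOfFinOrder_iff_pow_eq_one.mpr ⟨m, hm, ?_⟩
  rw [← map_pow, QuotientGroup.mk'_apply, QuotientGroup.eq_one_iff]
  exact Subgroup.mem_subgroupOf.mpr (mem_Cpow.mpr ⟨c, by simp⟩)

lemma Cpow_finiteIndex (C : Subgroup G) [IsMulCommutative C] [hFI : C.FiniteIndex]
    (hfg : Group.FG ↥C) {m : ℕ} (hm : 0 < m) : (Cpow C m).FiniteIndex := by
  constructor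
  rw [← Subgroup.relIndex_mul_index (Cpow_le C m)]
  haveI := Cpow_quot_finite C hfg hm
  exact mul_ne_zero (Subgroup.index_ne_zero_of_finite) hFI.index_ne_zero

section
variable (C : Subgroup G) [hN : C.Normal] [hFI : C.FiniteIndex] [hCC : IsMulCommutative C]

def psiC : ↥C →* ↥(KC C) :=
  MonoidHom.codRestrict ((profiniteIota G).comp C.subtype) (KC C) (fun c => by
    show piC C (profiniteIota G (c : G)) = 1
    rw [piC_iota]
    exact (QuotientGroup.eq_one_iff _).mpr c.2)

lemma psiC_val (c : ↥C) : ((psiC C c : ↥(KC C)) : ProfiniteCompletion G) = profiniteIota G (c : G) := rfl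

def coordPow (hfg : Group.FG ↥C) {m : ℕ} (hm : 0 < m) : NormalFiniteIndexSubgroup G :=
  ⟨Cpow C m, Cpow_normal C m, Cpow_finiteIndex C hfg hm⟩

lemma pow_descend (hfg : Group.FG ↥C) {m : ℕ} (hm : 0 < m) (c : ↥C) (τ : ↥(KC C))
    (h : psiC C c = τ ^ m) : ∃ e : ↥C, c = e ^ m := by
  obtain ⟨g, hgm, hgC, -⟩ := approx3 (τ : ProfiniteCompletion G) (coordPow C hfg hm) (coordC C) (coordC C)
  have hτC : ((τ : ProfiniteCompletion G) : ProfiniteAmbient G) (coordC C) = 1 := τ.2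
  have hgmem : g ∈ C := by
    refine (QuotientGroup.eq_one_iff g).mp ?_
    have := hgC; rw [hτC] at this; exact this
  -- coordinate of h at coordPow
  have hcoord : (QuotientGroup.mk c.1 : G ⧸ Cpow C m)
      = (((τ : ProfiniteCompletion G) : ProfiniteAmbient G) (coordPow C hfg hm)) ^ m := by
    have := congrArg (fun z : ↥(KC C) => ((z : ProfiniteCompletion G) : ProfiniteAmbient G) (coordPow C hfg hm)) h
    exact this
  rw [← hgm] at hcoord
  have hcoord2 : (QuotientGroup.mk c.1 : G ⧸ Cpow C m) = QuotientGroup.mk (g ^ m) := by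
    rw [hcoord]; rfl
  have hmem : c.1 ∈ Cpow C m := by
    have h1 : (c.1)⁻¹ * g ^ m ∈ Cpow C m := QuotientGroup.eq.mp hcoord2
    have h2 : g ^ m ∈ Cpow C m := mem_Cpow.mpr ⟨⟨g, hgmem⟩, rfl⟩
    have := mul_mem h2 (inv_mem h1)
    simpa [mul_assoc] using this
  obtain ⟨e, he⟩ := mem_Cpow.mp hmem
  exact ⟨e, by apply Subtype.ext; rw [← he]; rfl⟩

lemma KC_torsionfree (hfg : Group.FG ↥C)
    (htf : ∀ (x : ↥C) (k : ℕ), 0 < k → x ^ k = 1 → x = 1)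
    (κ : ↥(KC C)) (k : ℕ) (hk : 0 < k) (hκ : κ ^ k = 1) : κ = 1 := by
  haveI : ∀ m : ℕ, (Cpow C m).Normal := fun m => Cpow_normal C m
  apply Subtype.ext; apply Subtype.ext; funext M
  show ((κ : ProfiniteCompletion G) : ProfiniteAmbient G) M = 1
  set t := Nat.card (G ⧸ M.1) with hts
  have ht : 0 < t := Nat.card_pos
  have hkt : 0 < k * t := Nat.mul_pos hk ht
  obtain ⟨g, hgM, hgC, hgP⟩ := approx3 (κ : ProfiniteCompletion G) M (coordC C) (coordPow C hfg hkt)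
  have hκC : ((κ : ProfiniteCompletion G) : ProfiniteAmbient G) (coordC C) = 1 := κ.2
  have hgmem : g ∈ C := by
    refine (QuotientGroup.eq_one_iff g).mp ?_
    have := hgC; rw [hκC] at this; exact this
  -- coordinate of hκ at coordPow
  have hcoord : ((((κ : ProfiniteCompletion G) : ProfiniteAmbient G) (coordPow C hfg hkt)) : G ⧸ Cpow C (k*t)) ^ k = 1 := by
    have := congrArg (fun z : ↥(KC C) => ((z : ProfiniteCompletion G) : ProfiniteAmbient G) (coordPow C hfg hkt)) hκ
    exact this
  rw [← hgP] at hcoord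
  have hgk : g ^ k ∈ Cpow C (k * t) := by
    refine (QuotientGroup.eq_one_iff _).mp ?_
    have : (QuotientGroup.mk (g ^ k) : G ⧸ Cpow C (k*t)) = (QuotientGroup.mk g : G ⧸ Cpow C (k*t)) ^ k := by rfl
    rw [this]; exact hcoord
  obtain ⟨d, hd⟩ := mem_Cpow.mp hgk
  set gC : ↥C := ⟨g, hgmem⟩ with hgC
  have hCd : gC ^ k = d ^ (k * t) := by
    apply Subtype.ext
    show g ^ k = (d : G) ^ (k * t)
    rw [hd]
  have heq : gC = d ^ t := by
    have h1 : (gC * (d ^ t)⁻¹) ^ k = 1 := by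
      rw [mul_pow, inv_pow, ← pow_mul, mul_comm t k, ← hCd]
      group
    have := htf _ k hk h1
    rw [mul_inv_eq_one] at this
    exact this
  rw [← hgM]
  show (QuotientGroup.mk g : G ⧸ M.1) = 1
  have : (QuotientGroup.mk g : G ⧸ M.1) = (QuotientGroup.mk (d : G) : G ⧸ M.1) ^ t := by
    rw [show g = (d : G) ^ t from congrArg Subtype.val heq]; rfl
  rw [this, hts]
  exact pow_card_eq_one'
end

section
variable (C : Subgroup G) [hN : C.Normal] [hFI : C.FiniteIndex] [hCC : IsMulCommutative C]

instance : CompactSpace (ProfiniteCompletion G) :=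
  isCompact_iff_compactSpace.mp ((Subgroup.isClosed_topologicalClosure _).isCompact)

lemma KC_closed : IsClosed ((KC C : Subgroup (ProfiniteCompletion G)) : Set (ProfiniteCompletion G)) := by
  have : ((KC C : Subgroup (ProfiniteCompletion G)) : Set (ProfiniteCompletion G))
      = (fun x : ProfiniteCompletion G => (x : ProfiniteAmbient G) (coordC C)) ⁻¹' {1} := by
    ext x; exact mem_KC C
  rw [this]
  exact IsClosed.preimage ((continuous_apply (coordC C)).comp continuous_subtype_val)
    isClosed_singleton

lemma exists_decomp (hfg : Group.FG ↥C) {m : ℕ} (hm : 0 < m) (κ : ↥(KC C)) :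
    ∃ (c : ↥C) (τ : ↥(KC C)), κ = psiC C c * τ ^ m := by
  classical
  set S : Set (ProfiniteCompletion G) :=
    (fun y : ProfiniteCompletion G => y ^ m) '' (KC C : Set (ProfiniteCompletion G)) with hS
  have hScompact : IsCompact S := ((KC_closed C).isCompact).image (continuous_pow m)
  have hSclosed : IsClosed S := hScompact.isClosed
  haveI : Finite (↥C ⧸ (Cpow C m).subgroupOf C) := Cpow_quot_finite C hfg hm
  set W : Set (ProfiniteCompletion G) :=
    ⋃ q : ↥C ⧸ (Cpow C m).subgroupOf C,
      (fun z => profiniteIota G ((Quotient.out q : ↥C) : G) * z) '' S with hW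
  have hWclosed : IsClosed W := by
    apply isClosed_iUnion_of_finite
    intro q
    exact (Homeomorph.mulLeft (profiniteIota G ((Quotient.out q : ↥C) : G))).isClosedMap _ hSclosed
  have hsub : ∀ c : ↥C, profiniteIota G (c : G) ∈ W := by
    intro c
    set q : ↥C ⧸ (Cpow C m).subgroupOf C := QuotientGroup.mk c with hq
    set r : ↥C := Quotient.out q with hr
    have hrc : r⁻¹ * c ∈ (Cpow C m).subgroupOf C := by
      apply QuotientGroup.eq.mp
      rw [hr, hq, QuotientGroup.out_eq']
    obtain ⟨d, hd⟩ := mem_Cpow.mp (Subgroup.mem_subgroupOf.mp hrc)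
    refine Set.mem_iUnion.mpr ⟨q, ⟨(psiC C d : ProfiniteCompletion G) ^ m, ?_, ?_⟩⟩
    · exact ⟨(psiC C d : ProfiniteCompletion G), (psiC C d).2, rfl⟩
    · show profiniteIota G (r : G) * (psiC C d : ProfiniteCompletion G) ^ m = profiniteIota G (c : G)
      rw [psiC_val, ← map_pow, ← map_mul]
      congr 1
      rw [hd]
      show (r : G) * ((r⁻¹ * c : ↥C) : G) = (c : G)
      push_cast
      group
  have hclos : (κ : ProfiniteCompletion G) ∈
      closure {z : ProfiniteCompletion G | ∃ c : ↥C, z = profiniteIota G (c : G)} := by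
    rw [mem_closure_iff]
    intro O hO hκO
    obtain ⟨V, hV, rfl⟩ := isOpen_induced_iff.mp hO
    set V' : Set (ProfiniteAmbient G) := V ∩ ((fun y : ProfiniteAmbient G => y (coordC C)) ⁻¹' {1}) with hV'
    have hV'open : IsOpen V' := hV.inter ((continuous_apply (coordC C)).isOpen_preimage _ (isOpen_discrete _))
    have hκV' : ((κ : ProfiniteCompletion G) : ProfiniteAmbient G) ∈ V' := ⟨hκO, κ.2⟩
    have hκclos : ((κ : ProfiniteCompletion G) : ProfiniteAmbient G) ∈
        closure ((profiniteMap G).range : Set (ProfiniteAmbient G)) := (κ : ProfiniteCompletion G).2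
    obtain ⟨y, ⟨hyV, hyC⟩, g, rfl⟩ := mem_closure_iff.mp hκclos _ hV'open hκV'
    have hgC : g ∈ C := by
      refine (QuotientGroup.eq_one_iff g).mp ?_
      exact hyC
    exact ⟨profiniteIota G g, hyV, ⟨⟨g, hgC⟩, rfl⟩⟩
  have hκW : (κ : ProfiniteCompletion G) ∈ W := by
    apply closure_minimal ?_ hWclosed hclos
    rintro z ⟨c, rfl⟩
    exact hsub c
  obtain ⟨q, y, hyK, hyeq⟩ := Set.mem_iUnion.mp hκW
  obtain ⟨w, hwK, rfl⟩ := hyK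
  refine ⟨Quotient.out q, ⟨w, hwK⟩, ?_⟩
  apply Subtype.ext
  rw [← hyeq]
  rfl
end


end ProfConjAux

private lemma comm_solve {K : Type*} [CommGroup K] (P T Dm Gm Am F : K)
    (h : P * T = Dm * Gm * Am * F) : Dm * Am * T⁻¹ = P * (Gm * F)⁻¹ := by
  have h' : P = Dm * Gm * Am * F * T⁻¹ := by rw [← h]; group
  rw [eq_mul_inv_iff_mul_eq, h']
  simp only [mul_comm, mul_left_comm, mul_assoc]

set_option maxHeartbeats 1000000 in
open ProfConjAux in
/-- For a finitely generated virtually free abelian group `G`, every finite subgroup `H`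
of the profinite completion `Ĝ` is conjugate to a subgroup of `ι(G)`: there is `b ∈ Ĝ`
with `bHb⁻¹ ⊆ ι(G)`. -/
theorem finite_subgroups_of_completion_conjugate_into_image
    (G : Type*) [Group G] (hGfg : Group.FG G) (hGvfa : VirtuallyFreeAbelian G)
    (H : Subgroup (ProfiniteCompletion G)) (hH : Finite H) :
    ∃ b : ProfiniteCompletion G,
      H.map (MulAut.conj b).toMonoidHom ≤ (profiniteIota G).range := by
  classical
  obtain ⟨C, hNorm, hFI', hComm, hfg, htf⟩ := ProfConjAux.exists_good_normal (G := G) hGvfa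
  haveI := hNorm; haveI := hFI'; haveI := hComm
  haveI : Fintype ↥H := Fintype.ofFinite _
  set m := Nat.card ↥H with hmdef
  have hm0 : 0 < m := Nat.card_pos
  set ι := profiniteIota G with hι
  set π := piC C with hπ
  -- section of π on H
  set g0 : ↥H → G := fun h => Quotient.out (π h.1) with hg0
  set u : ↥H → ProfiniteCompletion G := fun h => ι (g0 h) with hu
  have hπu : ∀ h : ↥H, π (u h) = π h.1 := by
    intro h
    show π (ι (g0 h)) = π h.1
    rw [hι, hπ, piC_iota, hg0]
    exact QuotientGroup.out_eq' _
  have hdK : ∀ h : ↥H, h.1 * (u h)⁻¹ ∈ KC C := by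
    intro h
    have : π (h.1 * (u h)⁻¹) = 1 := by
      rw [map_mul, map_inv, hπu, mul_inv_cancel]
    exact this
  set d : ↥H → ↥(KC C) := fun h => ⟨h.1 * (u h)⁻¹, hdK h⟩ with hd
  -- conjugation action on K
  have hαK : ∀ (h : ↥H) (κ : ↥(KC C)), u h * (κ : ProfiniteCompletion G) * (u h)⁻¹ ∈ KC C := by
    intro h κ
    have hκ : π (κ : ProfiniteCompletion G) = 1 := κ.2
    have : π (u h * (κ : ProfiniteCompletion G) * (u h)⁻¹) = 1 := by
      rw [map_mul, map_mul, map_inv, hκ, mul_one, mul_inv_cancel]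
    exact this
  set α : ↥H → ↥(KC C) →* ↥(KC C) := fun h =>
    { toFun := fun κ => ⟨u h * (κ : ProfiniteCompletion G) * (u h)⁻¹, hαK h κ⟩
      map_one' := by
        apply Subtype.ext
        show u h * ((1 : ↥(KC C)) : ProfiniteCompletion G) * (u h)⁻¹ = ((1 : ↥(KC C)) : ProfiniteCompletion G)
        show u h * 1 * (u h)⁻¹ = 1
        group
      map_mul' := by
        intro a b
        apply Subtype.ext
        show u h * ((a : ProfiniteCompletion G) * (b : ProfiniteCompletion G)) * (u h)⁻¹
            = (u h * (a : ProfiniteCompletion G) * (u h)⁻¹) * (u h * (b : ProfiniteCompletion G) * (u h)⁻¹)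
        group } with hα
  -- the 2-cocycle with values in C
  have hfCmem : ∀ h x : ↥H, g0 h * g0 x * (g0 (h * x))⁻¹ ∈ C := by
    intro h x
    refine (QuotientGroup.eq_one_iff _).mp ?_
    have e1 : (QuotientGroup.mk (g0 h * g0 x * (g0 (h * x))⁻¹) : G ⧸ C)
        = QuotientGroup.mk (g0 h) * QuotientGroup.mk (g0 x) * (QuotientGroup.mk (g0 (h * x)))⁻¹ := by
      rfl
    have e2 : ∀ y : ↥H, (QuotientGroup.mk (g0 y) : G ⧸ C) = π y.1 := by
      intro y; rw [hg0]; exact QuotientGroup.out_eq' _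
    rw [e1, e2, e2, e2]
    have : π (h * x).1 = π h.1 * π x.1 := map_mul π h.1 x.1
    rw [this]
    group
  set fC : ↥H → ↥H → ↥C := fun h x => ⟨g0 h * g0 x * (g0 (h * x))⁻¹, hfCmem h x⟩ with hfC
  have hψval : ∀ c : ↥C, ((psiC C c : ↥(KC C)) : ProfiniteCompletion G) = ι (c : G) := fun c => rfl
  have hfval : ∀ h x : ↥H,
      ((psiC C (fC h x) : ↥(KC C)) : ProfiniteCompletion G) = u h * u x * (u (h * x))⁻¹ := by
    intro h x
    rw [hψval]
    show ι (g0 h * g0 x * (g0 (h * x))⁻¹) = u h * u x * (u (h * x))⁻¹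
    rw [map_mul, map_mul, map_inv]
  -- the star identity
  have hstar : ∀ h x : ↥H, d (h * x) = d h * α h (d x) * psiC C (fC h x) := by
    intro h x
    apply Subtype.ext
    have lhs : (d (h * x) : ProfiniteCompletion G) = (h.1 * x.1) * (u (h * x))⁻¹ := rfl
    have rhs : ((d h * α h (d x) * psiC C (fC h x) : ↥(KC C)) : ProfiniteCompletion G)
        = (h.1 * (u h)⁻¹) * (u h * (x.1 * (u x)⁻¹) * (u h)⁻¹) * (u h * u x * (u (h * x))⁻¹) := by
      show (d h : ProfiniteCompletion G) * (α h (d x) : ProfiniteCompletion G)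
          * ((psiC C (fC h x) : ↥(KC C)) : ProfiniteCompletion G) = _
      rw [hfval]
      rfl
    rw [lhs, rhs]
    group
  -- averaging
  set D : ↥(KC C) := ∏ x : ↥H, d x with hD
  set F : ↥H → ↥C := fun h => ∏ x : ↥H, fC h x with hF
  have hav : ∀ h : ↥H, D = (d h) ^ m * α h D * psiC C (F h) := by
    intro h
    have e1 : D = ∏ x : ↥H, d (h * x) := by
      rw [hD]
      exact (Equiv.prod_comp (Equiv.mulLeft h) d).symm
    have e2 : ∏ x : ↥H, d (h * x) = ∏ x : ↥H, (d h * α h (d x) * psiC C (fC h x)) := by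
      refine Finset.prod_congr rfl fun x _ => hstar h x
    calc D = ∏ x : ↥H, d (h * x) := e1
      _ = ∏ x : ↥H, (d h * α h (d x) * psiC C (fC h x)) := e2
      _ = (d h) ^ m * α h (∏ x : ↥H, d x) * psiC C (∏ x : ↥H, fC h x) := by
          rw [Finset.prod_mul_distrib, Finset.prod_mul_distrib, Finset.prod_const,
            Finset.card_univ, ← Nat.card_eq_fintype_card, ← hmdef, ← map_prod, ← map_prod]
      _ = (d h) ^ m * α h D * psiC C (F h) := rfl
  -- decomposition of D
  obtain ⟨cD, τ, hDdec⟩ := exists_decomp C hfg hm0 D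
  -- conjugation of C-elements
  set γ : ↥H → ↥C → ↥C := fun h c => ⟨g0 h * (c : G) * (g0 h)⁻¹, hNorm.conj_mem _ c.2 _⟩ with hγ
  have hαψ : ∀ (h : ↥H) (c : ↥C), α h (psiC C c) = psiC C (γ h c) := by
    intro h c
    apply Subtype.ext
    show u h * ((psiC C c : ↥(KC C)) : ProfiniteCompletion G) * (u h)⁻¹
        = ((psiC C (γ h c) : ↥(KC C)) : ProfiniteCompletion G)
    rw [hψval, hψval]
    show u h * ι (c : G) * (u h)⁻¹ = ι (g0 h * (c : G) * (g0 h)⁻¹)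
    rw [map_mul, map_mul, map_inv]
  set r : ↥H → ↥(KC C) := fun h => d h * α h τ * τ⁻¹ with hr
  -- r has values in the image of C
  have hrψ : ∀ h : ↥H, ∃ e : ↥C, r h = psiC C e := by
    intro h
    have h2 : psiC C cD * τ ^ m = (d h) ^ m * psiC C (γ h cD) * (α h τ) ^ m * psiC C (F h) := by
      have hh := hav h
      rw [hDdec, map_mul, map_pow, hαψ] at hh
      rw [hh]
      group
    have h1 : r h ^ m = (d h) ^ m * (α h τ) ^ m * (τ ^ m)⁻¹ := by
      show (d h * α h τ * τ⁻¹) ^ m = _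
      rw [mul_pow, mul_pow, inv_pow]
    have h3 : r h ^ m = psiC C (cD * ((γ h cD) * (F h))⁻¹) := by
      rw [h1, comm_solve _ _ _ _ _ _ h2, map_mul, map_inv, map_mul]
    obtain ⟨e, he⟩ := pow_descend C hfg hm0 _ (r h) h3.symm
    refine ⟨e, ?_⟩
    have hpow1 : (r h * (psiC C e)⁻¹) ^ m = 1 := by
      rw [mul_pow, inv_pow, ← map_pow, ← he, h3]
      group
    have := KC_torsionfree C hfg htf _ m hm0 hpow1
    rw [mul_inv_eq_one] at this
    exact this
  -- conclusion
  refine ⟨(τ : ProfiniteCompletion G)⁻¹, ?_⟩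
  rintro y hy
  rw [Subgroup.mem_map] at hy
  obtain ⟨x, hxH, rfl⟩ := hy
  set hH' : ↥H := ⟨x, hxH⟩ with hhH
  obtain ⟨e, he⟩ := hrψ hH'
  refine ⟨e * g0 hH', ?_⟩
  have hcomm1 : (τ⁻¹ * (d hH' * α hH' τ) : ↥(KC C)) = r hH' := by
    rw [hr]
    show τ⁻¹ * (d hH' * α hH' τ) = d hH' * α hH' τ * τ⁻¹
    rw [mul_comm]
  have hval : ((τ⁻¹ * (d hH' * α hH' τ) : ↥(KC C)) : ProfiniteCompletion G)
      = (τ : ProfiniteCompletion G)⁻¹ * ((x * (u hH')⁻¹) * (u hH' * (τ : ProfiniteCompletion G) * (u hH')⁻¹)) := rfl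
  have key : (τ : ProfiniteCompletion G)⁻¹ * x * ((τ : ProfiniteCompletion G)⁻¹)⁻¹
      = ((r hH' : ↥(KC C)) : ProfiniteCompletion G) * u hH' := by
    rw [← hcomm1, hval]
    group
  show ι (e * g0 hH') = (MulAut.conj (τ : ProfiniteCompletion G)⁻¹).toMonoidHom x
  have : (MulAut.conj (τ : ProfiniteCompletion G)⁻¹).toMonoidHom x
      = (τ : ProfiniteCompletion G)⁻¹ * x * ((τ : ProfiniteCompletion G)⁻¹)⁻¹ := rfl
  rw [this, key, he, hψval, map_mul]
end

section
/- Let Ĝ be a profinite group containing an open (finite-index closed) normal subgroup N isomorphic as a topological group to ẐⁿΩ (the profinite completion of ℤⁿ, a torsion-free profinite abelian group), such that Ĝ has no nontrivial finite normal subgroup and the abelianization of Ĝ is finite. Then the centre of Ĝ is trivial. -/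
section Aux

variable {n : ℕ}

local notation "Gn" => Multiplicative (Fin n → ℤ)

lemma eval_preimage_open (G : Type*) [Group G] (N : NormalFiniteIndexSubgroup G)
    (a : G ⧸ N.val) : IsOpen ((fun x : ProfiniteAmbient G => x N) ⁻¹' {a}) :=
  (continuous_apply N).isOpen_preimage _ (isOpen_discrete _)

lemma pow_cancel_zn {n : ℕ} (g h : Multiplicative (Fin n → ℤ)) (k : ℕ) (hk : k ≠ 0)
    (hgh : g ^ k = h ^ k) : g = h := by
  have h1 : (k : ℤ) • g.toAdd = (k : ℤ) • h.toAdd := by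
    have := congrArg Multiplicative.toAdd hgh
    simpa [toAdd_pow, natCast_zsmul] using this
  have := smul_right_injective (Fin n → ℤ) (by exact_mod_cast hk : (k:ℤ) ≠ 0) h1
  exact Multiplicative.toAdd.injective this

instance {n : ℕ} : Group.FG (Multiplicative (Fin n → ℤ)) :=
  @Group.fg_of_mul_group_fg _ _ (Module.Finite.iff_addGroup_fg.mp inferInstance)

lemma zhat_torsionfree (t : ProfiniteCompletion (Multiplicative (Fin n → ℤ)))
    (k : ℕ) (hk : k ≠ 0) (ht : t ^ k = 1) : t = 1 := by
  apply Subtype.ext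
  funext K
  -- the subgroup of k-th powers of elements of K
  set K' : Subgroup Gn := K.val.map (powMonoidHom k) with hK'
  have hK'norm : K'.Normal := inferInstance
  have hK'fi : K'.FiniteIndex := by
    have hfin : Finite (Gn ⧸ K') := by
      apply CommGroup.finite_of_fg_torsion
      intro x
      refine isOfFinOrder_iff_pow_eq_one.mpr ⟨K.val.index * k, ?_, ?_⟩
      · exact Nat.mul_pos (Nat.pos_of_ne_zero K.prop.2.index_ne_zero) (Nat.pos_of_ne_zero hk)
      · induction x using QuotientGroup.induction_on with
        | H g =>
          rw [← QuotientGroup.mk_pow, QuotientGroup.eq_one_iff, pow_mul]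
          exact ⟨g ^ K.val.index, K.val.pow_index_mem g, rfl⟩
    exact Subgroup.finiteIndex_of_finite_quotient
  set KK : NormalFiniteIndexSubgroup Gn := ⟨K', hK'norm, hK'fi⟩ with hKK
  -- find g in the image agreeing with t at coordinates K and KK
  have hmem : t.val ∈ closure ((profiniteMap Gn).range : Set (ProfiniteAmbient Gn)) := t.2
  have hopen : IsOpen {x : ProfiniteAmbient Gn | x K = t.val K ∧ x KK = t.val KK} :=
    (eval_preimage_open Gn K (t.val K)).inter (eval_preimage_open Gn KK (t.val KK))
  have hne := mem_closure_iff.mp hmem _ hopen ⟨rfl, rfl⟩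
  obtain ⟨x, ⟨hx1, hx2⟩, g, rfl⟩ := hne
  have hxK : QuotientGroup.mk g = t.val K := hx1
  have hxKK : QuotientGroup.mk g = t.val KK := hx2
  have htk : (t.val KK) ^ k = 1 := by
    have h3 : (t ^ k).val KK = 1 := by rw [ht]; rfl
    simpa using h3
  have hgk : g ^ k ∈ K' := by
    rw [← hxKK, ← QuotientGroup.mk_pow, QuotientGroup.eq_one_iff] at htk
    exact htk
  obtain ⟨h, hh, hhk⟩ := hgk
  have hgK : g ∈ K.val := by
    have := pow_cancel_zn g h k hk (by simpa [powMonoidHom] using hhk.symm)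
    rwa [this]
  have : t.val K = 1 := by rw [← hxK]; exact (QuotientGroup.eq_one_iff g).mpr hgK
  exact this

end Aux
/-- Let `Ĝ` be a profinite group with an open normal subgroup `N` isomorphic as a
topological group to `Ẑⁿ` (the profinite completion of `ℤⁿ`). If `Ĝ` has no nontrivial
finite normal subgroup and the abelianization of `Ĝ` is finite, then the centre of `Ĝ`
is trivial. -/
theorem centre_trivial_of_profinite_virtually_Zhat
    (Ghat : Type*) [Group Ghat] [TopologicalSpace Ghat] [IsTopologicalGroup Ghat]
    [CompactSpace Ghat] [T2Space Ghat] [TotallyDisconnectedSpace Ghat]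
    (n : ℕ) (N : Subgroup Ghat) (hN : N.Normal) (hNopen : IsOpen (N : Set Ghat))
    (hNiso : ∃ e : N ≃* ProfiniteCompletion (Multiplicative (Fin n → ℤ)),
      Continuous e ∧ Continuous e.symm)
    (hnofin : NoFiniteNormalSubgroup Ghat)
    (habfin : Finite (Abelianization Ghat)) :
    Subgroup.center Ghat = ⊥ := by
  classical
  obtain ⟨e, -, -⟩ := hNiso
  have hfinq : Finite (Ghat ⧸ N) := N.quotient_finite_of_isOpen hNopen
  have hfi : N.FiniteIndex := Subgroup.finiteIndex_of_finite_quotient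
  ext z
  simp only [Subgroup.mem_bot]
  constructor
  · intro hz
    -- transfer homomorphism to the abelian group Ẑⁿ
    set ϕ : N →* ProfiniteCompletion (Multiplicative (Fin n → ℤ)) := e.toMonoidHom with hϕ
    set f := MonoidHom.transfer ϕ with hf
    have key : ∀ (k : ℕ) (g₀ : Ghat), g₀⁻¹ * z ^ k * g₀ ∈ N → g₀⁻¹ * z ^ k * g₀ = z ^ k := by
      intro k g₀ _
      have hc : g₀⁻¹ * z ^ k = z ^ k * g₀⁻¹ :=
        Subgroup.mem_center_iff.mp (Subgroup.pow_mem _ hz k) g₀⁻¹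
      rw [hc, inv_mul_cancel_right]
    have htr := MonoidHom.transfer_eq_pow ϕ z key
    -- f z is killed by the cardinality of the abelianization
    set m := Nat.card (Abelianization Ghat) with hm
    have hm0 : m ≠ 0 := Nat.card_ne_zero.mpr ⟨⟨1⟩, habfin⟩
    have hfz : f z ^ m = 1 := by
      have h1 : f z = Abelianization.lift f (Abelianization.of z) :=
        (Abelianization.lift_apply_of f z).symm
      rw [h1, ← map_pow, pow_card_eq_one', map_one]
    rw [htr] at hfz
    have h2 := zhat_torsionfree _ m hm0 hfz
    have h3 : (⟨z ^ N.index, MonoidHom.transfer_eq_pow_aux z key⟩ : N) = 1 :=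
      e.injective (h2.trans (map_one e).symm)
    have h4 : z ^ N.index = 1 := by
      have := congrArg (Subgroup.subtype N) h3
      simpa using this
    -- z generates a finite normal subgroup
    have hzfin : IsOfFinOrder z :=
      isOfFinOrder_iff_pow_eq_one.mpr ⟨N.index,
        Nat.pos_of_ne_zero hfi.index_ne_zero, h4⟩
    have hfinz : Finite (Subgroup.zpowers z) := hzfin.finite_zpowers
    have hnorm : (Subgroup.zpowers z).Normal := by
      constructor
      intro h hh g
      obtain ⟨j, rfl⟩ := hh
      have hc : (z ^ j : Ghat) ∈ Subgroup.center Ghat := Subgroup.zpow_mem _ hz j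
      have : g * z ^ j * g⁻¹ = z ^ j := by
        rw [Subgroup.mem_center_iff.mp hc g, mul_inv_cancel_right]
      rw [this]
      exact Subgroup.zpow_mem _ (Subgroup.mem_zpowers z) j
    have := hnofin (Subgroup.zpowers z) hnorm hfinz
    have hzmem : z ∈ Subgroup.zpowers z := Subgroup.mem_zpowers z
    rw [this, Subgroup.mem_bot] at hzmem
    exact hzmem
  · rintro rfl
    exact Subgroup.one_mem _
end
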